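/- arXiv:2003.04616 — 6 statements merged into one kernel-verified Lean document; each statement's English description precedes it below -/
import Mathlib

section
/- Let μ, ν ∈ 𝓜 both satisfy condition (M.1) and suppose (M.2) holds for the pair (μ,ν). Then 𝓟𝓐𝓟(ℝ,ℝⁿ,μ,ν), equipped with the supremum norm ‖f‖_∞ = sup_{t∈ℝ} ‖f(t)‖, is a Banach space; equivalently, it is a closed subspace of the Banach space of bounded continuous functions ℝ → ℝⁿ: if (f_k) is a sequence in 𝓟𝓐𝓟(ℝ,ℝⁿ,μ,ν) converging uniformly on ℝ to a bounded continuous function f, then f ∈ 𝓟𝓐𝓟(ℝ,ℝⁿ,μ,ν). -/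
open MeasureTheory Filter Topology
open scoped ENNReal NNReal

noncomputable section

/-- The class `𝓜` of positive measures on `ℝ`: infinite total mass, finite on compact
intervals. -/
def InM (μ : Measure ℝ) : Prop :=
  μ Set.univ = ⊤ ∧ ∀ s t : ℝ, s ≤ t → μ (Set.Icc s t) < ⊤

/-- Bohr almost periodic function. -/
def AP {E : Type*} [NormedAddCommGroup E] (f : ℝ → E) : Prop :=
  Continuous f ∧ ∀ ε : ℝ, 0 < ε → ∃ l : ℝ, 0 < l ∧ ∀ a : ℝ,
    ∃ τ ∈ Set.Icc a (a + l), ∀ t : ℝ, ‖f (t + τ) - f t‖ < ε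

/-- Bounded continuous function. -/
def BC {E : Type*} [NormedAddCommGroup E] (f : ℝ → E) : Prop :=
  Continuous f ∧ ∃ C : ℝ, ∀ t : ℝ, ‖f t‖ ≤ C

/-- The ergodic space `𝓔(ℝ, E, μ, ν)`. -/
def Erg {E : Type*} [NormedAddCommGroup E] (μ ν : Measure ℝ) (f : ℝ → E) : Prop :=
  BC f ∧ Filter.Tendsto (fun z : ℝ =>
      ((ν (Set.Icc (-z) z)).toReal)⁻¹ * ∫ t in Set.Icc (-z) z, ‖f t‖ ∂μ)
    Filter.atTop (nhds 0)

/-- `(μ,ν)`-pseudo almost periodic functions `𝓟𝓐𝓟(ℝ, E, μ, ν)`. -/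
def PAP {E : Type*} [NormedAddCommGroup E] (μ ν : Measure ℝ) (f : ℝ → E) : Prop :=
  BC f ∧ ∃ g φ : ℝ → E, AP g ∧ Erg μ ν φ ∧ ∀ t, f t = g t + φ t

/-- Condition (M.1). -/
def M1 (μ : Measure ℝ) : Prop :=
  ∀ τ : ℝ, ∃ β : ℝ, 0 < β ∧ ∃ a b : ℝ, ∀ A : Set ℝ, MeasurableSet A →
    A ∩ Set.Icc a b = ∅ → μ ((fun x => x + τ) '' A) ≤ ENNReal.ofReal β * μ A

/-- Condition (M.2). -/
def M2 (μ ν : Measure ℝ) : Prop :=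
  Filter.limsup (fun r : ℝ => μ (Set.Icc (-r) r) / ν (Set.Icc (-r) r)) Filter.atTop < ⊤

theorem apUC {E : Type*} [NormedAddCommGroup E] {g : ℝ → E} (hg : AP g) :
    ∀ ρ : ℝ, 0 < ρ → ∃ δ : ℝ, 0 < δ ∧ ∀ x y : ℝ, |x - y| ≤ δ → ‖g x - g y‖ < ρ := by
  intro ρ hρ
  obtain ⟨l, hl, hτ⟩ := hg.2 (ρ/3) (by linarith)
  have hK : IsCompact (Set.Icc (-1 : ℝ) (l+1)) := isCompact_Icc
  have hUC : UniformContinuousOn g (Set.Icc (-1 : ℝ) (l+1)) :=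
    hK.uniformContinuousOn_of_continuous hg.1.continuousOn
  rw [Metric.uniformContinuousOn_iff] at hUC
  obtain ⟨δ', hδ', hδ'spec⟩ := hUC (ρ/3) (by linarith)
  refine ⟨min (δ'/2) 1, by positivity, ?_⟩
  intro x y hxy
  obtain ⟨τ, hτmem, hτg⟩ := hτ (-x)
  have hx1 : x + τ ∈ Set.Icc (-1 : ℝ) (l+1) := by
    simp only [Set.mem_Icc] at hτmem ⊢; constructor <;> linarith
  have hxy1 : |x - y| ≤ 1 := le_trans hxy (min_le_right _ _)
  have hxy2 : |x - y| < δ' := lt_of_le_of_lt (le_trans hxy (min_le_left _ _)) (by linarith)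
  have habs := abs_le.mp hxy1
  have hy1 : y + τ ∈ Set.Icc (-1 : ℝ) (l+1) := by
    simp only [Set.mem_Icc] at hτmem ⊢; constructor <;> linarith
  have h1 : ‖g (x + τ) - g x‖ < ρ/3 := hτg x
  have h2 : ‖g (y + τ) - g y‖ < ρ/3 := hτg y
  have h3 : dist (g (x+τ)) (g (y+τ)) < ρ/3 := by
    apply hδ'spec _ hx1 _ hy1
    rw [Real.dist_eq]
    simpa using hxy2
  rw [dist_eq_norm] at h3
  have h4 := dist_triangle4 (g x) (g (x+τ)) (g (y+τ)) (g y)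
  rw [dist_eq_norm, dist_eq_norm, dist_eq_norm, dist_eq_norm] at h4
  have h1' : ‖g x - g (x+τ)‖ < ρ/3 := by rw [norm_sub_rev]; exact h1
  linarith

theorem apNet {E : Type*} [NormedAddCommGroup E] {g : ℝ → E} (hg : AP g)
    {ρ : ℝ} (hρ : 0 < ρ) :
    ∃ p : ℕ, ∃ u : Fin (p+1) → ℝ, ∀ s : ℝ, ∃ i, ∀ t : ℝ, ‖g (t + s) - g (t + u i)‖ < ρ := by
  obtain ⟨δ, hδ, hδspec⟩ := apUC hg (ρ/3) (by linarith)
  obtain ⟨l, hl, hτ⟩ := hg.2 (ρ/3) (by linarith)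
  refine ⟨⌈l/δ⌉₊, fun i => (i : ℝ) * δ, ?_⟩
  intro s
  obtain ⟨τ, hτmem, hτg⟩ := hτ (-s)
  set w : ℝ := s + τ with hw
  have hw0 : 0 ≤ w := by simp only [Set.mem_Icc] at hτmem; simp only [hw]; linarith [hτmem.1]
  have hwl : w ≤ l := by simp only [Set.mem_Icc] at hτmem; simp only [hw]; linarith [hτmem.2]
  have hfloor : ⌊w/δ⌋₊ ≤ ⌈l/δ⌉₊ :=
    le_trans (Nat.floor_mono (by gcongr)) (Nat.floor_le_ceil _)
  refine ⟨⟨⌊w/δ⌋₊, Nat.lt_succ_of_le hfloor⟩, ?_⟩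
  intro t
  have hfl : (⌊w/δ⌋₊ : ℝ) * δ ≤ w := by
    rw [← le_div_iff₀ hδ]
    exact Nat.floor_le (by positivity)
  have hfu : w < ((⌊w/δ⌋₊ : ℝ) + 1) * δ := by
    rw [← div_lt_iff₀ hδ]
    exact Nat.lt_floor_add_one _
  have h1 : ‖g (t + s + τ) - g (t + s)‖ < ρ/3 := hτg (t + s)
  have h2 : ‖g (t + w) - g (t + (⌊w/δ⌋₊ : ℝ) * δ)‖ < ρ/3 := by
    apply hδspec
    rw [abs_le]
    constructor <;> [linarith; nlinarith]
  have heq : t + s + τ = t + w := by rw [hw]; ring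
  rw [heq] at h1
  have h4 := dist_triangle (g (t+s)) (g (t+w)) (g (t + (⌊w/δ⌋₊:ℝ)*δ))
  rw [dist_eq_norm, dist_eq_norm, dist_eq_norm] at h4
  have h1' : ‖g (t+s) - g (t+w)‖ < ρ/3 := by rw [norm_sub_rev]; exact h1
  simp only []
  linarith

theorem commonAP {E : Type*} [NormedAddCommGroup E] {g h : ℝ → E} (hg : AP g) (hh : AP h) :
    ∀ ε : ℝ, 0 < ε → ∃ l : ℝ, 0 < l ∧ ∀ a : ℝ, ∃ τ ∈ Set.Icc a (a + l),
      ∀ t : ℝ, ‖g (t + τ) - g t‖ < ε ∧ ‖h (t + τ) - h t‖ < ε := by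
  intro ε hε
  by_contra hcon
  push_neg at hcon
  classical
  set sep : ℝ → Prop := fun τ => ∃ t, ε ≤ ‖g (t+τ) - g t‖ ∨ ε ≤ ‖h (t+τ) - h t‖ with hsepdef
  have bad : ∀ M : ℝ, 0 ≤ M → ∃ x : ℝ, ∀ y : ℝ, |y| ≤ M → sep (x - y) := by
    intro M hM
    obtain ⟨a, ha⟩ := hcon (2*M+2) (by linarith)
    refine ⟨a + M + 1, ?_⟩
    intro y hy
    have hy' := abs_le.mp hy
    obtain ⟨t, ht⟩ := ha (a + M + 1 - y) ⟨by linarith, by linarith⟩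
    rcases le_or_gt ε ‖g (t + (a + M + 1 - y)) - g t‖ with h' | h'
    · exact ⟨t, Or.inl h'⟩
    · exact ⟨t, Or.inr (ht h')⟩
  set pickM : List ℝ → ℝ := fun xs => xs.foldr (fun y m => max |y| m) 0 with hpickM
  have hMnn : ∀ xs, 0 ≤ pickM xs := by
    intro xs; induction xs with
    | nil => simp [hpickM]
    | cons z zs ih => simp only [hpickM, List.foldr_cons]; positivity
  have hMmem : ∀ xs (y : ℝ), y ∈ xs → |y| ≤ pickM xs := by
    intro xs; induction xs with
    | nil => intro y hy; simp at hy
    | cons z zs ih =>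
      intro y hy
      rcases List.mem_cons.mp hy with h' | h'
      · subst h'; simp only [hpickM, List.foldr_cons]; exact le_max_left _ _
      · exact le_trans (ih y h') (by simp only [hpickM, List.foldr_cons]; exact le_max_right _ _)
  set pick : List ℝ → ℝ := fun xs => Classical.choose (bad (pickM xs) (hMnn xs)) with hpickdef
  have hpick : ∀ xs (y : ℝ), y ∈ xs → sep (pick xs - y) := fun xs y hy =>
    Classical.choose_spec (bad (pickM xs) (hMnn xs)) y (hMmem xs y hy)
  set L : ℕ → List ℝ := fun k => Nat.rec [] (fun _ xs => pick xs :: xs) k with hL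
  set x : ℕ → ℝ := fun k => pick (L k) with hx
  have hLsucc : ∀ k, L (k+1) = x k :: L k := fun k => rfl
  have hmem : ∀ i j, i < j → x i ∈ L j := by
    intro i j hij
    induction j with
    | zero => omega
    | succ j ih =>
      rw [hLsucc]
      rcases Nat.lt_succ_iff_lt_or_eq.mp hij with h' | h'
      · exact List.mem_cons_of_mem _ (ih h')
      · subst h'; exact List.mem_cons_self
  have hsepij : ∀ i j, i < j → sep (x j - x i) := fun i j hij => hpick (L j) (x i) (hmem i j hij)
  obtain ⟨p, u, hu⟩ := apNet hg (half_pos hε)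
  obtain ⟨q, v, hv⟩ := apNet hh (half_pos hε)
  have choice : ∀ s : ℝ, ∃ ij : Fin (p+1) × Fin (q+1),
      ∀ t, ‖g (t+s) - g (t + u ij.1)‖ < ε/2 ∧ ‖h (t+s) - h (t + v ij.2)‖ < ε/2 := by
    intro s
    obtain ⟨i, hi⟩ := hu s; obtain ⟨j, hj⟩ := hv s
    exact ⟨(i,j), fun t => ⟨hi t, hj t⟩⟩
  set c : ℕ → Fin (p+1) × Fin (q+1) := fun k => Classical.choose (choice (x k)) with hc
  have hcspec : ∀ k t, ‖g (t + x k) - g (t + u (c k).1)‖ < ε/2 ∧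
      ‖h (t + x k) - h (t + v (c k).2)‖ < ε/2 := fun k => Classical.choose_spec (choice (x k))
  obtain ⟨k, k', hkk', hceq⟩ := Fintype.exists_ne_map_eq_of_card_lt
    (fun k : Fin ((p+1)*(q+1)+1) => c k.val)
    (by simp)
  have hvalne : (k : ℕ) ≠ (k' : ℕ) := fun hcontra => hkk' (Fin.val_injective hcontra)
  -- wlog i < j
  have main : ∀ i j : ℕ, i < j → c i = c j → False := by
    intro i j hij hcij
    obtain ⟨t0, hd⟩ := hsepij i j hij
    have heqg : ∀ t, ‖g (t + x j) - g (t + x i)‖ < ε := by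
      intro t
      have h1 := (hcspec j t).1
      have h2 := (hcspec i t).1
      rw [hcij] at h2
      have h4 := dist_triangle (g (t + x j)) (g (t + u (c j).1)) (g (t + x i))
      rw [dist_eq_norm, dist_eq_norm, dist_eq_norm] at h4
      have h2' : ‖g (t + u (c j).1) - g (t + x i)‖ < ε/2 := by rw [norm_sub_rev]; exact h2
      linarith
    have heqh : ∀ t, ‖h (t + x j) - h (t + x i)‖ < ε := by
      intro t
      have h1 := (hcspec j t).2
      have h2 := (hcspec i t).2
      rw [hcij] at h2
      have h4 := dist_triangle (h (t + x j)) (h (t + v (c j).2)) (h (t + x i))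
      rw [dist_eq_norm, dist_eq_norm, dist_eq_norm] at h4
      have h2' : ‖h (t + v (c j).2) - h (t + x i)‖ < ε/2 := by rw [norm_sub_rev]; exact h2
      linarith
    have e1 : t0 - x i + x j = t0 + (x j - x i) := by ring
    have e2 : t0 - x i + x i = t0 := by ring
    have hg' := heqg (t0 - x i)
    have hh' := heqh (t0 - x i)
    rw [e1, e2] at hg' hh'
    rcases hd with h' | h' <;> linarith
  rcases lt_or_gt_of_ne hvalne with hlt | hlt
  · exact main _ _ hlt hceq
  · exact main _ _ hlt hceq.symm

theorem apSub {E : Type*} [NormedAddCommGroup E] {g h : ℝ → E} (hg : AP g) (hh : AP h) :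
    AP (fun t => g t - h t) := by
  refine ⟨hg.1.sub hh.1, ?_⟩
  intro ε hε
  obtain ⟨l, hl, hτ⟩ := commonAP hg hh (ε/2) (half_pos hε)
  refine ⟨l, hl, ?_⟩
  intro a
  obtain ⟨τ, hτmem, hτspec⟩ := hτ a
  refine ⟨τ, hτmem, ?_⟩
  intro t
  obtain ⟨h1, h2⟩ := hτspec t
  have : g (t+τ) - h (t+τ) - (g t - h t) = (g (t+τ) - g t) - (h (t+τ) - h t) := by abel
  calc ‖g (t+τ) - h (t+τ) - (g t - h t)‖ = ‖(g (t+τ) - g t) - (h (t+τ) - h t)‖ := by rw [this]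
    _ ≤ ‖g (t+τ) - g t‖ + ‖h (t+τ) - h t‖ := norm_sub_le _ _
    _ < ε/2 + ε/2 := by gcongr
    _ = ε := by ring

theorem apUniformLimit {E : Type*} [NormedAddCommGroup E] {g : ℕ → ℝ → E} {G : ℝ → E}
    (hg : ∀ k, AP (g k)) (hcont : Continuous G)
    (hconv : ∀ ε : ℝ, 0 < ε → ∃ K, ∀ k ≥ K, ∀ t, ‖g k t - G t‖ ≤ ε) : AP G := by
  refine ⟨hcont, ?_⟩
  intro ε hε
  obtain ⟨K, hK⟩ := hconv (ε/4) (by linarith)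
  obtain ⟨l, hl, hτ⟩ := (hg K).2 (ε/4) (by linarith)
  refine ⟨l, hl, ?_⟩
  intro a
  obtain ⟨τ, hτmem, hτspec⟩ := hτ a
  refine ⟨τ, hτmem, ?_⟩
  intro t
  have h1 := hK K le_rfl (t + τ)
  have h2 := hK K le_rfl t
  have h3 := hτspec t
  have h4 := dist_triangle4 (G (t+τ)) (g K (t+τ)) (g K t) (G t)
  rw [dist_eq_norm, dist_eq_norm, dist_eq_norm, dist_eq_norm] at h4
  have h1' : ‖G (t+τ) - g K (t+τ)‖ ≤ ε/4 := by rw [norm_sub_rev]; exact h1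
  linarith

theorem finIcc {μ : Measure ℝ} (hμ : InM μ) (z w : ℝ) : μ (Set.Icc z w) ≠ ⊤ := by
  rcases le_or_gt z w with h | h
  · exact (hμ.2 z w h).ne
  · rw [Set.Icc_eq_empty (not_le.mpr h)]; simp

theorem nrTendsto {ν : Measure ℝ} (hν : InM ν) :
    Tendsto (fun z : ℝ => (ν (Set.Icc (-z) z)).toReal) atTop atTop := by
  rw [tendsto_atTop]
  intro C
  have huniv : (Set.univ : Set ℝ) = ⋃ n : ℕ, Set.Icc (-(n:ℝ)) (n:ℝ) := by
    ext x
    simp only [Set.mem_univ, Set.mem_iUnion, Set.mem_Icc, true_iff]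
    obtain ⟨n, hn⟩ := exists_nat_ge |x|
    exact ⟨n, by cases abs_le.mp hn; constructor <;> linarith⟩
  have hdir : Directed (fun x1 x2 : Set ℝ => x1 ⊆ x2) (fun n : ℕ => Set.Icc (-(n:ℝ)) (n:ℝ)) := by
    intro i j
    refine ⟨max i j, Set.Icc_subset_Icc ?_ ?_, Set.Icc_subset_Icc ?_ ?_⟩ <;>
      simp [neg_le_neg_iff, Nat.cast_le, le_max_left, le_max_right]
  have htop : (⨆ n : ℕ, ν (Set.Icc (-(n:ℝ)) (n:ℝ))) = ⊤ := by
    rw [← hdir.measure_iUnion, ← huniv, hν.1]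
  have : (ENNReal.ofReal C) < ⨆ n : ℕ, ν (Set.Icc (-(n:ℝ)) (n:ℝ)) := by
    rw [htop]; exact ENNReal.ofReal_lt_top
  obtain ⟨n, hn⟩ := lt_iSup_iff.mp this
  filter_upwards [eventually_ge_atTop (n:ℝ)] with z hz
  have hsub : Set.Icc (-(n:ℝ)) (n:ℝ) ⊆ Set.Icc (-z) z :=
    Set.Icc_subset_Icc (by linarith) hz
  have hle : ENNReal.ofReal C ≤ ν (Set.Icc (-z) z) := le_trans hn.le (measure_mono hsub)
  exact (ENNReal.ofReal_le_iff_le_toReal (finIcc hν _ _)).mp hle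

theorem m1shift {μ : Measure ℝ} (hμ : InM μ) (hμ1 : M1 μ) (τ : ℝ) :
    ∃ B K : ℝ≥0∞, 1 ≤ B ∧ B ≠ ⊤ ∧ K ≠ ⊤ ∧ ∀ A : Set ℝ, MeasurableSet A →
      μ ((fun x => x + τ) '' A) ≤ B * μ A + K := by
  obtain ⟨β, hβ, a, b, hspec⟩ := hμ1 τ
  refine ⟨ENNReal.ofReal β + 1, μ (Set.Icc (a+τ) (b+τ)), le_add_self, by simp, finIcc hμ _ _, ?_⟩
  intro A hA
  have hsplit : (fun x => x + τ) '' A ⊆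
      ((fun x => x + τ) '' (A \ Set.Icc a b)) ∪ Set.Icc (a+τ) (b+τ) := by
    rintro y ⟨x, hx, rfl⟩
    by_cases hxI : x ∈ Set.Icc a b
    · right
      simp only [Set.mem_Icc]
      constructor <;> linarith [hxI.1, hxI.2]
    · left; exact ⟨x, ⟨hx, hxI⟩, rfl⟩
  calc μ ((fun x => x + τ) '' A)
      ≤ μ ((fun x => x + τ) '' (A \ Set.Icc a b)) + μ (Set.Icc (a+τ) (b+τ)) :=
        le_trans (measure_mono hsplit) (measure_union_le _ _)
    _ ≤ ENNReal.ofReal β * μ (A \ Set.Icc a b) + μ (Set.Icc (a+τ) (b+τ)) := by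
        gcongr
        exact hspec _ (hA.diff measurableSet_Icc) Set.diff_inter_self
    _ ≤ (ENNReal.ofReal β + 1) * μ A + μ (Set.Icc (a+τ) (b+τ)) := by
        refine add_le_add ?_ le_rfl
        exact le_trans (mul_le_mul_right (measure_mono Set.diff_subset) _)
          (mul_le_mul_left (self_le_add_right _ _) _)

theorem nuWindow {ν : Measure ℝ} (hν : InM ν) (hν1 : M1 ν) (d : ℝ) (hd : 0 ≤ d) :
    ∃ B K : ℝ≥0∞, 1 ≤ B ∧ B ≠ ⊤ ∧ K ≠ ⊤ ∧ ∀ z : ℝ, d ≤ z →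
      ν (Set.Icc (-(z+d)) (z+d)) ≤ B * ν (Set.Icc (-z) z) + K := by
  obtain ⟨B₁, K₁, hB₁, hB₁t, hK₁t, h₁⟩ := m1shift hν hν1 d
  obtain ⟨B₂, K₂, hB₂, hB₂t, hK₂t, h₂⟩ := m1shift hν hν1 (-d)
  refine ⟨1 + B₁ + B₂, K₁ + K₂, le_add_of_le_of_nonneg (le_add_of_le_of_nonneg le_rfl zero_le) zero_le,
    by finiteness, by finiteness, ?_⟩
  intro z hz
  have hcov : Set.Icc (-(z+d)) (z+d) ⊆ Set.Icc (-z) z ∪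
      ((fun x => x + d) '' Set.Icc (-z) z) ∪ ((fun x => x + (-d)) '' Set.Icc (-z) z) := by
    intro x hx
    obtain ⟨hx1, hx2⟩ := hx
    rcases le_or_gt x z with h | h
    · rcases le_or_gt (-z) x with h' | h'
      · exact Or.inl (Or.inl ⟨h', h⟩)
      · exact Or.inr ⟨x + d, ⟨by linarith, by linarith⟩, by dsimp; ring⟩
    · exact Or.inl (Or.inr ⟨x - d, ⟨by linarith, by linarith⟩, by dsimp; ring⟩)
  calc ν (Set.Icc (-(z+d)) (z+d))
      ≤ ν (Set.Icc (-z) z) + ν ((fun x => x + d) '' Set.Icc (-z) z)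
        + ν ((fun x => x + (-d)) '' Set.Icc (-z) z) :=
        le_trans (measure_mono hcov) (le_trans (measure_union_le _ _)
          (by gcongr; exact measure_union_le _ _))
    _ ≤ ν (Set.Icc (-z) z) + (B₁ * ν (Set.Icc (-z) z) + K₁)
        + (B₂ * ν (Set.Icc (-z) z) + K₂) := by
        gcongr
        · exact h₁ _ measurableSet_Icc
        · exact h₂ _ measurableSet_Icc
    _ = (1 + B₁ + B₂) * ν (Set.Icc (-z) z) + (K₁ + K₂) := by ring

theorem bcIntOn {E : Type*} [NormedAddCommGroup E] {φ : ℝ → E} (hc : Continuous φ)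
    {μ : Measure ℝ} {s : Set ℝ} (hs : μ s ≠ ⊤) {C : ℝ} (hb : ∀ t, ‖φ t‖ ≤ C) :
    IntegrableOn (fun t => ‖φ t‖) s μ := by
  haveI : Fact (μ s < ⊤) := ⟨lt_top_iff_ne_top.mpr hs⟩
  apply Integrable.mono' (integrable_const C)
  · exact hc.norm.aestronglyMeasurable.restrict
  · filter_upwards with t
    rw [Real.norm_eq_abs, abs_of_nonneg (norm_nonneg _)]
    exact hb t

theorem intBound {E : Type*} [NormedAddCommGroup E] {φ : ℝ → E} (hc : Continuous φ)
    {μ : Measure ℝ} {s : Set ℝ} (hs : μ s ≠ ⊤) {C : ℝ} (hb : ∀ t, ‖φ t‖ ≤ C) :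
    0 ≤ (∫ t in s, ‖φ t‖ ∂μ) ∧ (∫ t in s, ‖φ t‖ ∂μ) ≤ C * (μ s).toReal := by
  haveI : Fact (μ s < ⊤) := ⟨lt_top_iff_ne_top.mpr hs⟩
  constructor
  · exact integral_nonneg (fun t => norm_nonneg _)
  · calc (∫ t in s, ‖φ t‖ ∂μ) ≤ ∫ _ in s, C ∂μ :=
        integral_mono (bcIntOn hc hs hb) (integrable_const C) (fun t => hb t)
    _ = C * (μ s).toReal := by rw [setIntegral_const, smul_eq_mul, mul_comm]; rfl

theorem ergSub {E : Type*} [NormedAddCommGroup E] {μ ν : Measure ℝ} (hμ : InM μ)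
    {φ1 φ2 : ℝ → E} (h1 : Erg μ ν φ1) (h2 : Erg μ ν φ2) :
    Erg μ ν (fun t => φ1 t - φ2 t) := by
  obtain ⟨⟨hc1, C1, hC1⟩, ht1⟩ := h1
  obtain ⟨⟨hc2, C2, hC2⟩, ht2⟩ := h2
  refine ⟨⟨hc1.sub hc2, C1 + C2, fun t => le_trans (norm_sub_le _ _) (add_le_add (hC1 t) (hC2 t))⟩, ?_⟩
  apply squeeze_zero (g := fun z : ℝ =>
    ((ν (Set.Icc (-z) z)).toReal)⁻¹ * ∫ t in Set.Icc (-z) z, ‖φ1 t‖ ∂μ +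
    ((ν (Set.Icc (-z) z)).toReal)⁻¹ * ∫ t in Set.Icc (-z) z, ‖φ2 t‖ ∂μ)
  · intro z
    apply mul_nonneg (by positivity)
    exact integral_nonneg (fun t => norm_nonneg _)
  · intro z
    rw [← mul_add]
    apply mul_le_mul_of_nonneg_left _ (by positivity)
    have hint1 : IntegrableOn (fun t => ‖φ1 t‖) (Set.Icc (-z) z) μ :=
      bcIntOn hc1 (finIcc hμ _ _) hC1
    have hint2 : IntegrableOn (fun t => ‖φ2 t‖) (Set.Icc (-z) z) μ :=
      bcIntOn hc2 (finIcc hμ _ _) hC2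
    calc (∫ t in Set.Icc (-z) z, ‖φ1 t - φ2 t‖ ∂μ)
        ≤ ∫ t in Set.Icc (-z) z, (‖φ1 t‖ + ‖φ2 t‖) ∂μ :=
          integral_mono (bcIntOn (hc1.sub hc2) (finIcc hμ _ _)
            (fun t => le_trans (norm_sub_le _ _) (add_le_add (hC1 t) (hC2 t))))
            (hint1.add hint2) (fun t => norm_sub_le _ _)
      _ = (∫ t in Set.Icc (-z) z, ‖φ1 t‖ ∂μ) + ∫ t in Set.Icc (-z) z, ‖φ2 t‖ ∂μ :=
          integral_add hint1 hint2
  · simpa using ht1.add ht2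

theorem ratioBound {μ ν : Measure ℝ} (hμ : InM μ) (hν : InM ν) (hM2 : M2 μ ν) :
    ∃ R : ℝ, 0 ≤ R ∧ ∀ᶠ z in (atTop : Filter ℝ),
      (μ (Set.Icc (-z) z)).toReal ≤ R * (ν (Set.Icc (-z) z)).toReal := by
  set L := Filter.limsup (fun r : ℝ => μ (Set.Icc (-r) r) / ν (Set.Icc (-r) r)) Filter.atTop
  have hLt : L ≠ ⊤ := hM2.ne
  have hLL : L < L + 1 := ENNReal.lt_add_right hLt one_ne_zero
  have hev : ∀ᶠ z in (atTop : Filter ℝ),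
      μ (Set.Icc (-z) z) / ν (Set.Icc (-z) z) < L + 1 :=
    Filter.eventually_lt_of_limsup_lt hLL
  have hν1 : ∀ᶠ z in (atTop : Filter ℝ), 1 ≤ (ν (Set.Icc (-z) z)).toReal :=
    (nrTendsto hν).eventually_ge_atTop 1
  refine ⟨(L + 1).toReal, ENNReal.toReal_nonneg, ?_⟩
  filter_upwards [hev, hν1] with z h1 h2
  have hνne : ν (Set.Icc (-z) z) ≠ 0 := by
    intro h0
    rw [h0] at h2; simp at h2; linarith
  have hνt : ν (Set.Icc (-z) z) ≠ ⊤ := finIcc hν _ _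
  have hμν : μ (Set.Icc (-z) z) ≤ (L + 1) * ν (Set.Icc (-z) z) :=
    (ENNReal.div_le_iff hνne hνt).mp h1.le
  calc (μ (Set.Icc (-z) z)).toReal ≤ ((L + 1) * ν (Set.Icc (-z) z)).toReal :=
      ENNReal.toReal_mono (ENNReal.mul_ne_top (by finiteness) hνt) hμν
    _ = (L + 1).toReal * (ν (Set.Icc (-z) z)).toReal := ENNReal.toReal_mul

theorem ergUniformLimit {E : Type*} [NormedAddCommGroup E] {μ ν : Measure ℝ}
    (hμ : InM μ) (hν : InM ν) (hM2 : M2 μ ν) {φ : ℕ → ℝ → E} {Φ : ℝ → E}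
    (herg : ∀ k, Erg μ ν (φ k)) (hΦ : BC Φ)
    (hconv : ∀ ε : ℝ, 0 < ε → ∃ K, ∀ k ≥ K, ∀ t, ‖φ k t - Φ t‖ ≤ ε) : Erg μ ν Φ := by
  obtain ⟨R, hR, hRev⟩ := ratioBound hμ hν hM2
  refine ⟨hΦ, ?_⟩
  rw [Metric.tendsto_nhds]
  intro ε hε
  obtain ⟨K, hK⟩ := hconv (ε / (2 * (R + 1))) (by positivity)
  have hKb := hK K le_rfl
  have hA := (herg K).2
  rw [Metric.tendsto_nhds] at hA
  obtain ⟨hΦc, CΦ, hCΦ⟩ := hΦ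
  obtain ⟨⟨hφc, Cφ, hCφ⟩, -⟩ := herg K
  filter_upwards [hA (ε/2) (by positivity), hRev] with z h1 h2
  set I := Set.Icc (-z) z
  set nr := (ν I).toReal
  have hnr : 0 ≤ nr := ENNReal.toReal_nonneg
  have hintΦ : IntegrableOn (fun t => ‖Φ t‖) I μ := bcIntOn hΦc (finIcc hμ _ _) hCΦ
  have hintφ : IntegrableOn (fun t => ‖φ K t‖) I μ := bcIntOn hφc (finIcc hμ _ _) hCφ
  have hintd : IntegrableOn (fun t => ‖Φ t - φ K t‖) I μ :=
    bcIntOn (hΦc.sub hφc) (finIcc hμ _ _)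
      (fun t => le_trans (norm_sub_le _ _) (add_le_add (hCΦ t) (hCφ t)))
  have hsplit : (∫ t in I, ‖Φ t‖ ∂μ) ≤ (∫ t in I, ‖φ K t‖ ∂μ) + ∫ t in I, ‖Φ t - φ K t‖ ∂μ := by
    rw [← integral_add hintφ hintd]
    apply integral_mono hintΦ (hintφ.add hintd)
    intro t
    calc ‖Φ t‖ = ‖φ K t + (Φ t - φ K t)‖ := by congr 1; abel
      _ ≤ ‖φ K t‖ + ‖Φ t - φ K t‖ := norm_add_le _ _
  have hdint : (∫ t in I, ‖Φ t - φ K t‖ ∂μ) ≤ (ε / (2 * (R + 1))) * (μ I).toReal :=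
    (intBound (hΦc.sub hφc) (finIcc hμ _ _)
      (fun t => by rw [Pi.sub_apply, norm_sub_rev]; exact hKb t)).2
  rw [Real.dist_eq, sub_zero] at h1 ⊢
  have hterm1 : nr⁻¹ * ∫ t in I, ‖φ K t‖ ∂μ < ε/2 := by
    have := h1
    rwa [abs_of_nonneg (mul_nonneg (by positivity)
      (integral_nonneg (fun t => norm_nonneg _)))] at this
  have hbound : nr⁻¹ * ∫ t in I, ‖Φ t‖ ∂μ < ε := by
    have hc2 : nr⁻¹ * ((ε / (2 * (R + 1))) * (μ I).toReal) ≤ ε/2 := by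
      have hmr : (μ I).toReal ≤ R * nr := h2
      calc nr⁻¹ * ((ε / (2 * (R + 1))) * (μ I).toReal)
          ≤ nr⁻¹ * ((ε / (2 * (R + 1))) * (R * nr)) := by
            apply mul_le_mul_of_nonneg_left _ (by positivity)
            apply mul_le_mul_of_nonneg_left hmr (by positivity)
        _ = (nr⁻¹ * nr) * (ε / (2 * (R + 1)) * R) := by ring
        _ ≤ 1 * (ε / (2 * (R + 1)) * R) := by
            apply mul_le_mul_of_nonneg_right _ (by positivity)
            rcases eq_or_lt_of_le hnr with h | h
            · rw [← h]; simp
            · rw [inv_mul_cancel₀ (ne_of_gt h)]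
        _ = ε * (R / (2 * (R + 1))) := by ring
        _ ≤ ε * (1/2) := by
            apply mul_le_mul_of_nonneg_left _ (le_of_lt hε)
            rw [div_le_div_iff₀ (by positivity) (by norm_num)]
            linarith
        _ = ε/2 := by ring
    calc nr⁻¹ * ∫ t in I, ‖Φ t‖ ∂μ
        ≤ nr⁻¹ * ((∫ t in I, ‖φ K t‖ ∂μ) + ∫ t in I, ‖Φ t - φ K t‖ ∂μ) := by
          apply mul_le_mul_of_nonneg_left hsplit (by positivity)
      _ = nr⁻¹ * (∫ t in I, ‖φ K t‖ ∂μ) + nr⁻¹ * ∫ t in I, ‖Φ t - φ K t‖ ∂μ := by ring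
      _ ≤ nr⁻¹ * (∫ t in I, ‖φ K t‖ ∂μ) + nr⁻¹ * ((ε / (2 * (R + 1))) * (μ I).toReal) := by
          gcongr
      _ < ε/2 + ε/2 := by
          apply add_lt_add_of_lt_of_le hterm1 hc2
      _ = ε := by ring
  rwa [abs_of_nonneg (mul_nonneg (by positivity) (integral_nonneg (fun t => norm_nonneg _)))]

theorem ergOfRatioZero {E : Type*} [NormedAddCommGroup E] {μ ν : Measure ℝ} (hμ : InM μ)
    (hzero : Filter.limsup (fun r : ℝ => μ (Set.Icc (-r) r) / ν (Set.Icc (-r) r))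
      Filter.atTop = 0)
    {f : ℝ → E} (hf : BC f) : Erg μ ν f := by
  obtain ⟨hc, C, hC⟩ := hf
  have hC0 : (0:ℝ) ≤ C := le_trans (norm_nonneg _) (hC 0)
  refine ⟨⟨hc, C, hC⟩, ?_⟩
  have h1 : Tendsto (fun z : ℝ => μ (Set.Icc (-z) z) / ν (Set.Icc (-z) z)) atTop (𝓝 0) := by
    rw [ENNReal.tendsto_nhds_zero]
    intro ε hε
    have hev := Filter.eventually_lt_of_limsup_lt (f := (atTop : Filter ℝ))
      (u := fun z : ℝ => μ (Set.Icc (-z) z) / ν (Set.Icc (-z) z)) (by rw [hzero]; exact hε)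
    filter_upwards [hev] with z hz
    exact hz.le
  have hratio : Tendsto (fun z : ℝ => (μ (Set.Icc (-z) z) / ν (Set.Icc (-z) z)).toReal)
      atTop (𝓝 0) := by
    have h2 := (ENNReal.tendsto_toReal (a := 0) (by simp)).comp h1
    simp only [ENNReal.toReal_zero] at h2
    exact h2
  apply squeeze_zero (g := fun z => C * (μ (Set.Icc (-z) z) / ν (Set.Icc (-z) z)).toReal)
  · intro z
    exact mul_nonneg (by positivity) (integral_nonneg fun t => norm_nonneg _)
  · intro z
    have hb := (intBound hc (finIcc hμ (-z) z) hC).2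
    calc ((ν (Set.Icc (-z) z)).toReal)⁻¹ * ∫ t in Set.Icc (-z) z, ‖f t‖ ∂μ
        ≤ ((ν (Set.Icc (-z) z)).toReal)⁻¹ * (C * (μ (Set.Icc (-z) z)).toReal) :=
          mul_le_mul_of_nonneg_left hb (by positivity)
      _ = C * ((μ (Set.Icc (-z) z)).toReal / (ν (Set.Icc (-z) z)).toReal) := by ring
      _ = C * (μ (Set.Icc (-z) z) / ν (Set.Icc (-z) z)).toReal := by
          rw [ENNReal.toReal_div]
  · simpa using hratio.const_mul C

theorem keyMchoice {c B₂ K₁ K₂ : ℝ} (hc : 0 < c) (hB₂ : 0 < B₂) (hK₁ : 0 ≤ K₁)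
    (hK₂ : 0 ≤ K₂) : ∃ M : ℝ, 1 ≤ M ∧ c*K₂ + 2*B₂*K₁ ≤ c*B₂*M := by
  have hR : (0:ℝ) < c*B₂ := mul_pos hc hB₂
  have hQ : (0:ℝ) ≤ c*K₂ + 2*B₂*K₁ := by nlinarith
  refine ⟨(c*K₂ + 2*B₂*K₁)/(c*B₂) + 1, ?_, ?_⟩
  · have : 0 ≤ (c*K₂ + 2*B₂*K₁)/(c*B₂) := div_nonneg hQ hR.le
    linarith
  · have heq : c*B₂*((c*K₂ + 2*B₂*K₁)/(c*B₂) + 1) = (c*K₂ + 2*B₂*K₁) + c*B₂ := by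
      field_simp
    rw [heq]
    linarith

theorem keyArith {εv cv B₁ K₁ B₂ K₂ M ρ nz nz' mz wz I : ℝ}
    (hε : 0 < εv) (hc : 0 < cv) (hB₁ : 1 ≤ B₁) (hB₂ : 1 ≤ B₂) (hK₁ : 0 ≤ K₁)
    (hK₂ : 0 ≤ K₂) (hρeq : ρ * (2*B₁*B₂) = εv * cv)
    (hMge : cv*K₂ + 2*B₂*K₁ ≤ cv*B₂*M) (hM1 : 1 ≤ M) (hMz : M ≤ nz)
    (hwz : 0 ≤ wz) (hnz' : nz ≤ nz')
    (hcz : cv * nz ≤ mz) (hμR : mz ≤ B₁*wz + K₁) (hνR : nz' ≤ B₂*nz + K₂)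
    (hIa : εv * wz ≤ I) : ρ ≤ nz'⁻¹ * I := by
  have hB₁0 : (0:ℝ) < B₁ := lt_of_lt_of_le one_pos hB₁
  have hB₂0 : (0:ℝ) < B₂ := lt_of_lt_of_le one_pos hB₂
  have h2B : (0:ℝ) < 2*B₁*B₂ := by positivity
  have hρ : 0 < ρ := by nlinarith [mul_pos hε hc]
  have hnz'pos : 0 < nz' := by linarith
  have e2 : cv*K₂ + 2*B₂*K₁ ≤ cv*B₂*nz := by
    nlinarith [mul_le_mul_of_nonneg_left hMz (le_of_lt (mul_pos hc hB₂0))]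
  have e3 : cv*(B₂*nz + K₂) ≤ 2*B₂*(cv*nz - K₁) := by nlinarith
  have e4 : cv*nz - K₁ ≤ B₁*wz := by linarith
  have e5 : ρ*(B₂*nz+K₂) ≤ εv*wz := by
    apply le_of_mul_le_mul_left _ h2B
    calc 2*B₁*B₂*(ρ*(B₂*nz+K₂)) = (ρ*(2*B₁*B₂))*(B₂*nz+K₂) := by ring
      _ = (εv*cv)*(B₂*nz+K₂) := by rw [hρeq]
      _ = εv*(cv*(B₂*nz+K₂)) := by ring
      _ ≤ εv*(2*B₂*(cv*nz - K₁)) := mul_le_mul_of_nonneg_left e3 hε.le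
      _ ≤ εv*(2*B₂*(B₁*wz)) := by
          apply mul_le_mul_of_nonneg_left _ hε.le
          apply mul_le_mul_of_nonneg_left e4 (by positivity)
      _ = 2*B₁*B₂*(εv*wz) := by ring
  have e6 : ρ*nz' ≤ ρ*(B₂*nz+K₂) := mul_le_mul_of_nonneg_left hνR hρ.le
  have e7 : ρ*nz' ≤ I := le_trans (le_trans e6 e5) hIa
  calc ρ = (ρ*nz') * nz'⁻¹ := by field_simp
    _ ≤ I * nz'⁻¹ := mul_le_mul_of_nonneg_right e7 (by positivity)
    _ = nz'⁻¹ * I := by ring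

theorem keyLemma {E : Type*} [NormedAddCommGroup E] {μ ν : Measure ℝ}
    (hμ : InM μ) (hν : InM ν) (hμ1 : M1 μ) (hν1 : M1 ν)
    {c : ℝ} (hc : 0 < c)
    (hfreq : ∃ᶠ z in (atTop : Filter ℝ),
      c * (ν (Set.Icc (-z) z)).toReal ≤ (μ (Set.Icc (-z) z)).toReal)
    {g φ : ℝ → E} (hg : AP g) (hφ : Erg μ ν φ) {C : ℝ}
    (hC : ∀ t, ‖g t + φ t‖ ≤ C) (t0 : ℝ) : ‖g t0‖ ≤ C := by
  by_contra hcon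
  push_neg at hcon
  set ε : ℝ := (‖g t0‖ - C) / 3 with hεdef
  have hεpos : 0 < ε := by simp only [hεdef]; linarith
  have hgt0 : ‖g t0‖ = C + 3*ε := by simp only [hεdef]; ring
  obtain ⟨δ, hδ, hδspec⟩ := apUC hg ε hεpos
  obtain ⟨l, hl, hτ⟩ := hg.2 ε hεpos
  set U : Set ℝ := ⋃ τ ∈ {τ : ℝ | ∀ t, ‖g (t+τ) - g t‖ < ε},
    Set.Ioo (t0 + τ - δ) (t0 + τ + δ) with hUdef
  have hUmeas : MeasurableSet U := (isOpen_biUnion (fun τ _ => isOpen_Ioo)).measurableSet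
  obtain ⟨⟨hφc, Cφ, hCφ⟩, hφtend⟩ := hφ
  have hφU : ∀ x ∈ U, ε ≤ ‖φ x‖ := by
    intro x hx
    rw [hUdef, Set.mem_iUnion] at hx
    obtain ⟨τ, hx⟩ := hx
    rw [Set.mem_iUnion] at hx
    obtain ⟨hgood, hx⟩ := hx
    obtain ⟨hx1, hx2⟩ := hx
    have hgood' : ∀ t, ‖g (t+τ) - g t‖ < ε := hgood
    have h1 : ‖g x - g (t0 + τ)‖ < ε :=
      hδspec x (t0+τ) (abs_le.mpr ⟨by linarith, by linarith⟩)
    have h2 : ‖g (t0 + τ) - g t0‖ < ε := hgood' t0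
    have h4 := dist_triangle (g x) (g (t0+τ)) (g t0)
    rw [dist_eq_norm, dist_eq_norm, dist_eq_norm] at h4
    have h5 := norm_sub_norm_le (g x) (g t0)
    have h6 : ‖g x‖ ≤ ‖g x + φ x‖ + ‖φ x‖ := by
      calc ‖g x‖ = ‖(g x + φ x) - φ x‖ := by congr 1; abel
        _ ≤ ‖g x + φ x‖ + ‖φ x‖ := norm_sub_le _ _
    have h7 := hC x
    have h8 := le_trans (abs_norm_sub_norm_le (g x) (g t0)) h4
    have h9 := abs_le.mp (le_trans h8
      (by linarith : ‖g x - g (t0+τ)‖ + ‖g (t0 + τ) - g t0‖ ≤ 2*ε))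
    linarith [h9.1]
  set N : ℕ := ⌈l/δ⌉₊ with hNdef
  set d : ℝ := (N:ℝ) * δ with hddef
  have hd0 : 0 ≤ d := by positivity
  have hcov : ∀ x : ℝ, ∃ j : Fin (N+1), x - (j:ℝ)*δ ∈ U := by
    intro x
    obtain ⟨τ, hτmem, hτg⟩ := hτ (x - t0 - l)
    simp only [Set.mem_Icc] at hτmem
    have hw0 : 0 ≤ x - (t0 + τ) := by linarith [hτmem.2]
    have hwl : x - (t0 + τ) ≤ l := by linarith [hτmem.1]
    set w : ℝ := x - (t0 + τ) with hwdef
    have hfloor : ⌊w/δ⌋₊ ≤ N := by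
      rw [hNdef]
      exact le_trans (Nat.floor_mono (by gcongr)) (Nat.floor_le_ceil _)
    refine ⟨⟨⌊w/δ⌋₊, Nat.lt_succ_of_le hfloor⟩, ?_⟩
    have hfl : (⌊w/δ⌋₊:ℝ) * δ ≤ w := by
      rw [← le_div_iff₀ hδ]
      exact Nat.floor_le (by positivity)
    have hfu : w < ((⌊w/δ⌋₊:ℝ)+1) * δ := by
      rw [← div_lt_iff₀ hδ]
      exact Nat.lt_floor_add_one _
    refine Set.mem_biUnion (show (∀ t, ‖g (t+τ) - g t‖ < ε) from hτg) ?_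
    simp only [Set.mem_Ioo, Fin.val_mk]
    constructor <;> [linarith; linarith]
  set W : ℝ → Set ℝ := fun z => U ∩ Set.Icc (-(z+d)) (z+d) with hWdef
  have hWmeas : ∀ z, MeasurableSet (W z) := fun z => hUmeas.inter measurableSet_Icc
  have hWfin : ∀ z, μ (W z) ≠ ⊤ := fun z =>
    ((measure_mono Set.inter_subset_right).trans_lt (Ne.lt_top (finIcc hμ _ _))).ne
  choose Bf Kf hBf1 hBft hKft hBspec using fun j : Fin (N+1) => m1shift hμ hμ1 ((j:ℝ)*δ)
  set Bs : ℝ≥0∞ := ∑ j : Fin (N+1), Bf j with hBsdef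
  set Ks : ℝ≥0∞ := ∑ j : Fin (N+1), Kf j with hKsdef
  have hBst : Bs ≠ ⊤ := by
    rw [hBsdef]
    exact (ENNReal.sum_lt_top.mpr (fun j _ => (hBft j).lt_top)).ne
  have hKst : Ks ≠ ⊤ := by
    rw [hKsdef]
    exact (ENNReal.sum_lt_top.mpr (fun j _ => (hKft j).lt_top)).ne
  have hBs1 : 1 ≤ Bs :=
    le_trans (hBf1 ⟨0, Nat.succ_pos N⟩)
      (Finset.single_le_sum (f := Bf) (fun j _ => zero_le) (Finset.mem_univ _))
  have hμbound : ∀ z : ℝ, μ (Set.Icc (-z) z) ≤ Bs * μ (W z) + Ks := by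
    intro z
    have hsub : Set.Icc (-z) z ⊆ ⋃ j : Fin (N+1), (fun y => y + (j:ℝ)*δ) '' (W z) := by
      intro x hx
      obtain ⟨j, hj⟩ := hcov x
      refine Set.mem_iUnion.mpr ⟨j, ⟨x - (j:ℝ)*δ, ⟨hj, ?_⟩, by dsimp; ring⟩⟩
      obtain ⟨hx1, hx2⟩ := hx
      have hj0 : (0:ℝ) ≤ (j:ℝ)*δ := by positivity
      have hjd : (j:ℝ)*δ ≤ d := by
        rw [hddef]
        gcongr
        exact_mod_cast Nat.lt_succ_iff.mp j.isLt
      constructor <;> linarith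
    calc μ (Set.Icc (-z) z) ≤ ∑ j : Fin (N+1), μ ((fun y => y + (j:ℝ)*δ) '' (W z)) :=
        le_trans (measure_mono hsub) (measure_iUnion_fintype_le _ _)
      _ ≤ ∑ j : Fin (N+1), (Bf j * μ (W z) + Kf j) :=
        Finset.sum_le_sum (fun j _ => hBspec j _ (hWmeas z))
      _ = Bs * μ (W z) + Ks := by
        rw [Finset.sum_add_distrib, ← Finset.sum_mul]
  obtain ⟨Bν, Kν, hBν1, hBνt, hKνt, hνwin⟩ := nuWindow hν hν1 d hd0
  set B₁ : ℝ := Bs.toReal with hB₁def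
  set K₁ : ℝ := Ks.toReal with hK₁def
  set B₂ : ℝ := Bν.toReal with hB₂def
  set K₂ : ℝ := Kν.toReal with hK₂def
  have hB₁ : 1 ≤ B₁ := by
    have := ENNReal.toReal_mono hBst hBs1
    simpa using this
  have hB₂ : 1 ≤ B₂ := by
    have := ENNReal.toReal_mono hBνt hBν1
    simpa using this
  have hK₁0 : 0 ≤ K₁ := ENNReal.toReal_nonneg
  have hK₂0 : 0 ≤ K₂ := ENNReal.toReal_nonneg
  have hB₁0 : 0 < B₁ := lt_of_lt_of_le one_pos hB₁
  have hB₂0 : 0 < B₂ := lt_of_lt_of_le one_pos hB₂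
  obtain ⟨M, hM1, hMge⟩ := keyMchoice hc hB₂0 hK₁0 hK₂0
  set ρ : ℝ := ε * c / (2*B₁*B₂) with hρdef
  have h2Bpos : (0:ℝ) < 2*B₁*B₂ := by positivity
  have hρ : 0 < ρ := div_pos (mul_pos hεpos hc) h2Bpos
  have hρeq : ρ * (2*B₁*B₂) = ε * c := div_mul_cancel₀ _ (ne_of_gt h2Bpos)
  have hAd : Tendsto (fun z : ℝ => ((ν (Set.Icc (-(z+d)) (z+d))).toReal)⁻¹ *
      ∫ t in Set.Icc (-(z+d)) (z+d), ‖φ t‖ ∂μ) atTop (𝓝 0) :=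
    hφtend.comp (tendsto_atTop_add_const_right atTop d tendsto_id)
  have hfreq2 : ∃ᶠ z in (atTop:Filter ℝ), ρ ≤ ((ν (Set.Icc (-(z+d)) (z+d))).toReal)⁻¹ *
      ∫ t in Set.Icc (-(z+d)) (z+d), ‖φ t‖ ∂μ := by
    have hev : ∀ᶠ z in (atTop:Filter ℝ),
        (M ≤ (ν (Set.Icc (-z) z)).toReal ∧ d ≤ z) ∧ 0 ≤ z :=
      (((nrTendsto hν).eventually_ge_atTop M).and (eventually_ge_atTop d)).and
        (eventually_ge_atTop 0)
    refine (hfreq.and_eventually hev).mono ?_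
    rintro z ⟨hcz, ⟨hMz, hdz⟩, hz0⟩
    set nz : ℝ := (ν (Set.Icc (-z) z)).toReal with hnzdef
    set nz' : ℝ := (ν (Set.Icc (-(z+d)) (z+d))).toReal with hnz'def
    set mz : ℝ := (μ (Set.Icc (-z) z)).toReal with hmzdef
    set wz : ℝ := (μ (W z)).toReal with hwzdef
    have hwz0 : 0 ≤ wz := ENNReal.toReal_nonneg
    have hnznz' : nz ≤ nz' := by
      rw [hnzdef, hnz'def]
      exact ENNReal.toReal_mono (finIcc hν _ _)
        (measure_mono (Set.Icc_subset_Icc (by linarith) (by linarith)))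
    have hnz'pos : 0 < nz' := by linarith
    have hμR : mz ≤ B₁ * wz + K₁ := by
      have hb := hμbound z
      have hfin : Bs * μ (W z) + Ks ≠ ⊤ :=
        ENNReal.add_ne_top.mpr ⟨ENNReal.mul_ne_top hBst (hWfin z), hKst⟩
      calc mz ≤ (Bs * μ (W z) + Ks).toReal := ENNReal.toReal_mono hfin hb
        _ = B₁ * wz + K₁ := by
          rw [ENNReal.toReal_add (ENNReal.mul_ne_top hBst (hWfin z)) hKst,
            ENNReal.toReal_mul]
    have hνR : nz' ≤ B₂ * nz + K₂ := by
      have hb := hνwin z hdz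
      have hfin : Bν * ν (Set.Icc (-z) z) + Kν ≠ ⊤ :=
        ENNReal.add_ne_top.mpr ⟨ENNReal.mul_ne_top hBνt (finIcc hν _ _), hKνt⟩
      calc nz' ≤ (Bν * ν (Set.Icc (-z) z) + Kν).toReal := ENNReal.toReal_mono hfin hb
        _ = B₂ * nz + K₂ := by
          rw [ENNReal.toReal_add (ENNReal.mul_ne_top hBνt (finIcc hν _ _)) hKνt,
            ENNReal.toReal_mul]
    have hint : IntegrableOn (fun t => ‖φ t‖) (Set.Icc (-(z+d)) (z+d)) μ :=
      bcIntOn hφc (finIcc hμ _ _) hCφ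
    have hWsub : W z ⊆ Set.Icc (-(z+d)) (z+d) := Set.inter_subset_right
    have hIa : ε * wz ≤ ∫ t in Set.Icc (-(z+d)) (z+d), ‖φ t‖ ∂μ := by
      calc ε * wz ≤ ∫ t in W z, ‖φ t‖ ∂μ :=
          setIntegral_ge_of_const_le_real (hWmeas z) (hWfin z)
            (fun x hx => hφU x hx.1) (hint.mono_set hWsub)
        _ ≤ ∫ t in Set.Icc (-(z+d)) (z+d), ‖φ t‖ ∂μ :=
          setIntegral_mono_set hint
            (Filter.Eventually.of_forall (fun x => norm_nonneg _))
            (HasSubset.Subset.eventuallyLE hWsub)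
    exact keyArith hεpos hc hB₁ hB₂ hK₁0 hK₂0 hρeq hMge hM1 hMz hwz0 hnznz'
      hcz hμR hνR hIa
  rw [Metric.tendsto_nhds] at hAd
  obtain ⟨z, hz1, hz2⟩ := (hfreq2.and_eventually (hAd ρ hρ)).exists
  rw [Real.dist_eq, sub_zero] at hz2
  have := le_abs_self (((ν (Set.Icc (-(z+d)) (z+d))).toReal)⁻¹ *
      ∫ t in Set.Icc (-(z+d)) (z+d), ‖φ t‖ ∂μ)
  linarith

theorem pap_closed_under_uniform_limits {n : ℕ} (μ ν : Measure ℝ)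
    (hμ : InM μ) (hν : InM ν) (hμ1 : M1 μ) (hν1 : M1 ν) (hM2 : M2 μ ν)
    (F : ℕ → ℝ → (Fin n → ℝ)) (f : ℝ → (Fin n → ℝ))
    (hF : ∀ k, PAP μ ν (F k)) (hf : BC f)
    (hconv : TendstoUniformly F f Filter.atTop) :
    PAP μ ν f := by
  classical
  choose g φ hgk hφk hsum using fun k => (hF k).2
  by_cases hL : Filter.limsup (fun r : ℝ => μ (Set.Icc (-r) r) / ν (Set.Icc (-r) r))
      Filter.atTop = 0
  · refine ⟨hf, (fun _ => 0), f, ⟨continuous_const, ?_⟩, ergOfRatioZero hμ hL hf,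
      fun t => (zero_add _).symm⟩
    intro ε hε
    exact ⟨1, one_pos, fun a => ⟨a, ⟨le_refl a, by linarith⟩, fun t => by simpa using hε⟩⟩
  · -- the frequent lower bound on the ratio
    set L := Filter.limsup (fun r : ℝ => μ (Set.Icc (-r) r) / ν (Set.Icc (-r) r))
      Filter.atTop with hLdef
    have hLt : L ≠ ⊤ := hM2.ne
    have hhalfpos : 0 < L/2 := ENNReal.half_pos hL
    have hhalflt : L/2 < L := ENNReal.half_lt_self hL hLt
    have hhalft : L/2 ≠ ⊤ := ne_top_of_le_ne_top hLt ENNReal.half_le_self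
    have hfreq0 : ∃ᶠ z in (atTop : Filter ℝ),
        L/2 < μ (Set.Icc (-z) z) / ν (Set.Icc (-z) z) :=
      Filter.frequently_lt_of_lt_limsup Filter.isCobounded_le_of_bot hhalflt
    set c : ℝ := (L/2).toReal with hcdef
    have hcpos : 0 < c := ENNReal.toReal_pos hhalfpos.ne' hhalft
    have hfreq : ∃ᶠ z in (atTop : Filter ℝ),
        c * (ν (Set.Icc (-z) z)).toReal ≤ (μ (Set.Icc (-z) z)).toReal := by
      refine hfreq0.mono ?_
      intro z h1
      have hlt : L/2 * ν (Set.Icc (-z) z) < μ (Set.Icc (-z) z) :=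
        ENNReal.mul_lt_of_lt_div h1
      have hμt : μ (Set.Icc (-z) z) ≠ ⊤ := finIcc hμ _ _
      have := ENNReal.toReal_mono hμt hlt.le
      rwa [ENNReal.toReal_mul] at this
    -- F is uniformly Cauchy
    have hconvM := Metric.tendstoUniformly_iff.mp hconv
    have hFcb : ∀ ε : ℝ, 0 < ε → ∃ K, ∀ k ≥ K, ∀ m ≥ K, ∀ t,
        ‖F k t - F m t‖ ≤ ε := by
      intro ε hε
      obtain ⟨K, hK⟩ := eventually_atTop.mp (hconvM (ε/2) (half_pos hε))
      refine ⟨K, fun k hk m hm t => ?_⟩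
      have h1 := hK k hk t
      have h2 := hK m hm t
      have h3 := dist_triangle (F k t) (f t) (F m t)
      rw [dist_eq_norm] at h3
      rw [dist_comm] at h1
      linarith [h3, h1, h2, dist_nonneg (x := F k t) (y := f t)]
    -- the AP parts are uniformly Cauchy
    have hgc : ∀ ε : ℝ, 0 < ε → ∃ K, ∀ k ≥ K, ∀ m ≥ K, ∀ t,
        ‖g k t - g m t‖ ≤ ε := by
      intro ε hε
      obtain ⟨K, hK⟩ := hFcb ε hε
      refine ⟨K, fun k hk m hm t => ?_⟩
      refine keyLemma hμ hν hμ1 hν1 hcpos hfreq (apSub (hgk k) (hgk m))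
        (ergSub hμ (hφk k) (hφk m)) (C := ε) ?_ t
      intro s
      have he : g k s - g m s + (φ k s - φ m s) = F k s - F m s := by
        rw [hsum k s, hsum m s]; abel
      show ‖g k s - g m s + (φ k s - φ m s)‖ ≤ ε
      rw [he]
      exact hK k hk m hm s
    -- pointwise limits of the AP parts
    have hcau : ∀ t, CauchySeq (fun k => g k t) := by
      intro t
      rw [Metric.cauchySeq_iff]
      intro ε hε
      obtain ⟨K, hK⟩ := hgc (ε/2) (half_pos hε)
      refine ⟨K, fun k hk m hm => ?_⟩
      rw [dist_eq_norm]
      exact lt_of_le_of_lt (hK k hk m hm t) (by linarith)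
    choose G hG using fun t => cauchySeq_tendsto_of_complete (hcau t)
    have hGconv : ∀ ε : ℝ, 0 < ε → ∃ K, ∀ k ≥ K, ∀ t, ‖g k t - G t‖ ≤ ε := by
      intro ε hε
      obtain ⟨K, hK⟩ := hgc ε hε
      refine ⟨K, fun k hk t => ?_⟩
      have hlim : Tendsto (fun m => ‖g k t - g m t‖) atTop (𝓝 ‖g k t - G t‖) :=
        (tendsto_const_nhds.sub (hG t)).norm
      apply le_of_tendsto hlim
      filter_upwards [eventually_ge_atTop K] with m hm
      exact hK k hk m hm t
    have hGcont : Continuous G := by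
      have hTU : TendstoUniformly g G atTop := by
        rw [Metric.tendstoUniformly_iff]
        intro ε hε
        obtain ⟨K, hK⟩ := hGconv (ε/2) (half_pos hε)
        filter_upwards [eventually_ge_atTop K] with k hk t
        rw [dist_comm, dist_eq_norm]
        exact lt_of_le_of_lt (hK k hk t) (by linarith)
      exact hTU.continuous (Filter.Eventually.of_forall (fun k => (hgk k).1)).frequently
    have hGap : AP G := apUniformLimit hgk hGcont hGconv
    set Φ : ℝ → (Fin n → ℝ) := fun t => f t - G t with hΦdef
    have hφconv : ∀ ε : ℝ, 0 < ε → ∃ K, ∀ k ≥ K, ∀ t, ‖φ k t - Φ t‖ ≤ ε := by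
      intro ε hε
      obtain ⟨K1, hK1⟩ := hGconv (ε/2) (half_pos hε)
      obtain ⟨K2, hK2⟩ := eventually_atTop.mp (hconvM (ε/2) (half_pos hε))
      refine ⟨max K1 K2, fun k hk t => ?_⟩
      have hφk' : φ k t = F k t - g k t := by rw [hsum k t]; abel
      have he : φ k t - Φ t = (F k t - f t) + (G t - g k t) := by
        simp only [hφk', hΦdef]; abel
      rw [he]
      have h1 := hK1 k (le_trans (le_max_left _ _) hk) t
      have h2 := hK2 k (le_trans (le_max_right _ _) hk) t
      rw [dist_eq_norm] at h2
      calc ‖(F k t - f t) + (G t - g k t)‖ ≤ ‖F k t - f t‖ + ‖G t - g k t‖ :=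
          norm_add_le _ _
        _ ≤ ε/2 + ε/2 := by
            apply add_le_add
            · rw [norm_sub_rev]; exact h2.le
            · rw [norm_sub_rev]; exact h1
        _ = ε := by ring
    have hΦbc : BC Φ := by
      refine ⟨hf.1.sub hGcont, ?_⟩
      obtain ⟨Cf, hCf⟩ := hf.2
      obtain ⟨K, hK⟩ := hGconv 1 one_pos
      obtain ⟨CF, hCF⟩ := (hF K).1.2
      obtain ⟨Cφ, hCφ⟩ := (hφk K).1.2
      refine ⟨Cf + (CF + Cφ + 1), fun t => ?_⟩
      have hgKt : g K t = F K t - φ K t := by rw [hsum K t]; abel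
      have h1 : ‖g K t‖ ≤ CF + Cφ := by
        rw [hgKt]
        exact le_trans (norm_sub_le _ _) (add_le_add (hCF t) (hCφ t))
      have h2 : ‖G t‖ ≤ ‖g K t‖ + ‖g K t - G t‖ := by
        calc ‖G t‖ = ‖g K t - (g K t - G t)‖ := by congr 1; abel
          _ ≤ ‖g K t‖ + ‖g K t - G t‖ := norm_sub_le _ _
      have h3 := hK K le_rfl t
      calc ‖Φ t‖ = ‖f t - G t‖ := rfl
        _ ≤ ‖f t‖ + ‖G t‖ := norm_sub_le _ _
        _ ≤ Cf + (CF + Cφ + 1) := by linarith [hCf t]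
    have hΦerg : Erg μ ν Φ := ergUniformLimit hμ hν hM2 hφk hΦbc hφconv
    exact ⟨hf, G, Φ, hGap, hΦerg, fun t => by simp only [hΦdef]; abel⟩
end
end

section
/- Let μ, ν ∈ 𝓜 both satisfy condition (M.1) and suppose (M.2) holds for the pair (μ,ν). Then 𝓟𝓐𝓟(ℝ,ℝⁿ,μ,ν) is translation invariant: for every f ∈ 𝓟𝓐𝓟(ℝ,ℝⁿ,μ,ν) and every a ∈ ℝ, the function t ↦ f(t + a) also belongs to 𝓟𝓐𝓟(ℝ,ℝⁿ,μ,ν). -/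
open MeasureTheory Filter Topology

noncomputable section

section Aux

open Set ENNReal

variable {n : ℕ}

lemma InM.icc_lt_top {μ : Measure ℝ} (hμ : InM μ) (s t : ℝ) : μ (Set.Icc s t) < ⊤ :=
  lt_of_le_of_lt (measure_mono (Set.Icc_subset_Icc (min_le_left s t) (le_max_right s t)))
    (hμ.2 _ _ min_le_max)

lemma nu_toReal_top {ν : Measure ℝ} (hν : InM ν) :
    Filter.Tendsto (fun z : ℝ => (ν (Set.Icc (-z) z)).toReal) Filter.atTop Filter.atTop := by
  rw [Filter.tendsto_atTop]
  intro b
  have huniv : (Set.univ : Set ℝ) = ⋃ n : ℕ, Set.Icc (-(n : ℝ)) n := by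
    ext x
    simp only [Set.mem_univ, Set.mem_iUnion, Set.mem_Icc, true_iff]
    obtain ⟨m, hm⟩ := exists_nat_ge |x|
    exact ⟨m, by linarith [neg_abs_le x], by linarith [le_abs_self x]⟩
  have hsup : (⨆ m : ℕ, ν (Set.Icc (-(m : ℝ)) m)) = ⊤ := by
    rw [← hν.1, huniv]
    have hmono : Monotone (fun m : ℕ => Set.Icc (-(m : ℝ)) m) := fun i j hij =>
      Set.Icc_subset_Icc (neg_le_neg (Nat.cast_le.2 hij)) (Nat.cast_le.2 hij)
    exact (Directed.measure_iUnion hmono.directed_le).symm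
  have : ∃ m : ℕ, ENNReal.ofReal (max b 0) < ν (Set.Icc (-(m : ℝ)) m) := by
    by_contra h
    push_neg at h
    have := iSup_le h
    rw [hsup] at this
    exact (lt_irrefl _ (lt_of_le_of_lt this ENNReal.ofReal_lt_top))
  obtain ⟨m, hm⟩ := this
  filter_upwards [Filter.eventually_ge_atTop (m : ℝ)] with z hz
  have hsub : ν (Set.Icc (-(m : ℝ)) m) ≤ ν (Set.Icc (-z) z) :=
    measure_mono (Set.Icc_subset_Icc (by linarith) hz)
  have h1 : ENNReal.ofReal (max b 0) ≤ ν (Set.Icc (-z) z) := le_trans hm.le hsub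
  have h2 : (ENNReal.ofReal (max b 0)).toReal ≤ (ν (Set.Icc (-z) z)).toReal :=
    ENNReal.toReal_mono (hν.icc_lt_top _ _).ne h1
  rw [ENNReal.toReal_ofReal (le_max_right b 0)] at h2
  linarith [le_max_left b 0]

lemma image_add_eq_preimage (τ : ℝ) (B : Set ℝ) :
    (fun x => x + τ) '' B = (fun x => x + (-τ)) ⁻¹' B := by
  ext x
  simp only [Set.mem_image, Set.mem_preimage]
  constructor
  · rintro ⟨y, hy, rfl⟩
    have : y + τ + -τ = y := by ring
    rw [this]; exact hy
  · intro h
    exact ⟨x + -τ, h, by ring⟩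

lemma map_restrict_le {μ : Measure ℝ} (a β p q : ℝ)
    (H : ∀ A : Set ℝ, MeasurableSet A →
      A ∩ Set.Icc p q = ∅ → μ ((fun x => x + (-a)) '' A) ≤ ENNReal.ofReal β * μ A)
    {B : Set ℝ} (hB : MeasurableSet B) (hBJ : B ∩ Set.Icc p q = ∅) :
    (Measure.map (fun x => x + a) μ).restrict B ≤ (ENNReal.ofReal β) • (μ.restrict B) := by
  rw [Measure.le_iff]
  intro A hA
  rw [Measure.restrict_apply hA, Measure.smul_apply, Measure.restrict_apply hA, smul_eq_mul,
    Measure.map_apply (measurable_add_const a) (hA.inter hB)]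
  have him : (fun x => x + a) ⁻¹' (A ∩ B) = (fun x => x + (-a)) '' (A ∩ B) := by
    rw [image_add_eq_preimage]; simp
  rw [him]
  refine H _ (hA.inter hB) ?_
  rw [Set.eq_empty_iff_forall_notMem]
  rintro x ⟨⟨-, hxB⟩, hxJ⟩
  have : x ∈ B ∩ Set.Icc p q := ⟨hxB, hxJ⟩
  rw [hBJ] at this
  exact this

lemma lint_translate {μ : Measure ℝ} (hμ : InM μ) (hμ1 : M1 μ) (a C : ℝ)
    (φ : ℝ → Fin n → ℝ) (hφc : Continuous φ) (hC : ∀ t, ‖φ t‖ ≤ C) :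
    ∃ β : ℝ, 0 < β ∧ ∃ K : ℝ≥0∞, K ≠ ⊤ ∧ ∀ z : ℝ,
      ∫⁻ t in Set.Icc (-z) z, ENNReal.ofReal ‖φ (t + a)‖ ∂μ ≤
        ENNReal.ofReal β * ∫⁻ t in Set.Icc (-(z + |a|)) (z + |a|), ENNReal.ofReal ‖φ t‖ ∂μ + K := by
  obtain ⟨β, hβ, p, q, H⟩ := hμ1 (-a)
  refine ⟨β, hβ, ENNReal.ofReal C * μ (Set.Icc (p - a) (q - a)),
    ENNReal.mul_ne_top ENNReal.ofReal_ne_top (hμ.icc_lt_top _ _).ne, fun z => ?_⟩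
  set F : ℝ → ℝ≥0∞ := fun x => ENNReal.ofReal ‖φ x‖ with hFdef
  have hFm : Measurable F := ENNReal.measurable_ofReal.comp hφc.norm.measurable
  set m : Measure ℝ := Measure.map (fun x => x + a) μ with hmdef
  set S : Set ℝ := Set.Icc (-z + a) (z + a) with hSdef
  set J : Set ℝ := Set.Icc p q with hJdef
  have hS : MeasurableSet S := measurableSet_Icc
  have hJ : MeasurableSet J := measurableSet_Icc
  have hset : (fun x => x + a) ⁻¹' S = Set.Icc (-z) z := by
    ext x
    simp only [Set.mem_preimage, hSdef, Set.mem_Icc]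
    constructor <;> rintro ⟨h1, h2⟩ <;> exact ⟨by linarith, by linarith⟩
  have step1 : ∫⁻ t in Set.Icc (-z) z, F (t + a) ∂μ = ∫⁻ x in S, F x ∂m := by
    rw [hmdef, setLIntegral_map hS hFm (measurable_add_const a), hset]
  have split : ∫⁻ x in S, F x ∂m = ∫⁻ x in S ∩ J, F x ∂m + ∫⁻ x in S \ J, F x ∂m := by
    rw [← lintegral_union (hS.diff hJ) (disjoint_sdiff_self_right.mono_left Set.inter_subset_right),
      Set.inter_union_diff]
  have part1 : ∫⁻ x in S ∩ J, F x ∂m ≤ ENNReal.ofReal C * μ (Set.Icc (p - a) (q - a)) := by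
    have h1 : ∫⁻ x in S ∩ J, F x ∂m ≤ ∫⁻ _ in S ∩ J, ENNReal.ofReal C ∂m :=
      lintegral_mono fun x => ENNReal.ofReal_le_ofReal (hC x)
    rw [setLIntegral_const] at h1
    refine h1.trans ?_
    have hsetJ : (fun x => x + a) ⁻¹' J = Set.Icc (p - a) (q - a) := by
      ext x
      simp only [Set.mem_preimage, hJdef, Set.mem_Icc]
      constructor <;> rintro ⟨h1, h2⟩ <;> exact ⟨by linarith, by linarith⟩
    have hmJ : m J = μ (Set.Icc (p - a) (q - a)) := by
      rw [hmdef, Measure.map_apply (measurable_add_const a) hJ, hsetJ]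
    calc ENNReal.ofReal C * m (S ∩ J) ≤ ENNReal.ofReal C * m J :=
          mul_le_mul_right (measure_mono Set.inter_subset_right) _
      _ = ENNReal.ofReal C * μ (Set.Icc (p - a) (q - a)) := by rw [hmJ]
  have part2 : ∫⁻ x in S \ J, F x ∂m ≤
      ENNReal.ofReal β * ∫⁻ t in Set.Icc (-(z + |a|)) (z + |a|), F t ∂μ := by
    have hBJ : (S \ J) ∩ J = ∅ := Set.diff_inter_self
    have hle := map_restrict_le a β p q H (hS.diff hJ) hBJ
    calc ∫⁻ x in S \ J, F x ∂m ≤ ∫⁻ x, F x ∂((ENNReal.ofReal β) • μ.restrict (S \ J)) :=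
          lintegral_mono' hle le_rfl
      _ = ENNReal.ofReal β * ∫⁻ x in S \ J, F x ∂μ := lintegral_smul_measure _ _
      _ ≤ ENNReal.ofReal β * ∫⁻ t in Set.Icc (-(z + |a|)) (z + |a|), F t ∂μ := by
          refine mul_le_mul_right (lintegral_mono_set ?_) _
          refine Set.diff_subset.trans ?_
          exact Set.Icc_subset_Icc (by linarith [neg_abs_le a]) (by linarith [le_abs_self a])
  calc ∫⁻ t in Set.Icc (-z) z, F (t + a) ∂μ
      = ∫⁻ x in S ∩ J, F x ∂m + ∫⁻ x in S \ J, F x ∂m := by rw [step1, split]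
    _ ≤ ENNReal.ofReal C * μ (Set.Icc (p - a) (q - a)) +
        ENNReal.ofReal β * ∫⁻ t in Set.Icc (-(z + |a|)) (z + |a|), F t ∂μ := add_le_add part1 part2
    _ = ENNReal.ofReal β * ∫⁻ t in Set.Icc (-(z + |a|)) (z + |a|), F t ∂μ +
        ENNReal.ofReal C * μ (Set.Icc (p - a) (q - a)) := add_comm _ _

end Aux

section Aux2

open scoped ENNReal

variable {n : ℕ}

lemma nu_ratio {ν : Measure ℝ} (hν : InM ν) (hν1 : M1 ν) (c : ℝ) (hc : 0 ≤ c) :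
    ∃ Cr : ℝ, 0 < Cr ∧ ∃ Z : ℝ, ∀ z ≥ Z,
      (ν (Set.Icc (-(z + c)) (z + c))).toReal ≤ Cr * (ν (Set.Icc (-z) z)).toReal := by
  obtain ⟨β₁, hβ₁, p₁, q₁, H₁⟩ := hν1 c
  obtain ⟨β₂, hβ₂, p₂, q₂, H₂⟩ := hν1 (-c)
  refine ⟨β₁ + 1 + β₂, by linarith, |q₁| + |p₂| + c + 1, fun z hz => ?_⟩
  have habs1 : (0:ℝ) ≤ |q₁| := abs_nonneg _
  have habs2 : (0:ℝ) ≤ |p₂| := abs_nonneg _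
  have hq₁ : q₁ ≤ |q₁| := le_abs_self _
  have hp₂ : -|p₂| ≤ p₂ := neg_abs_le _
  have h1 : ν (Set.Icc z (z + c)) ≤ ENNReal.ofReal β₁ * ν (Set.Icc (z - c) z) := by
    have himg : (fun x => x + c) '' Set.Icc (z - c) z = Set.Icc z (z + c) := by
      have e1 : z - c + c = z := by ring
      rw [Set.image_add_const_Icc, e1]
    rw [← himg]
    refine H₁ _ measurableSet_Icc ?_
    rw [Set.eq_empty_iff_forall_notMem]
    rintro x ⟨⟨hx1, -⟩, ⟨-, hx4⟩⟩
    linarith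
  have h2 : ν (Set.Icc (-(z + c)) (-z)) ≤ ENNReal.ofReal β₂ * ν (Set.Icc (-z) (-z + c)) := by
    have himg : (fun x => x + (-c)) '' Set.Icc (-z) (-z + c) = Set.Icc (-(z + c)) (-z) := by
      have e1 : -z + -c = -(z + c) := by ring
      have e2 : -z + c + -c = -z := by ring
      rw [Set.image_add_const_Icc, e1, e2]
    rw [← himg]
    refine H₂ _ measurableSet_Icc ?_
    rw [Set.eq_empty_iff_forall_notMem]
    rintro x ⟨⟨-, hx2⟩, ⟨hx3, -⟩⟩
    linarith
  have hsub : Set.Icc (-(z + c)) (z + c) ⊆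
      (Set.Icc (-(z + c)) (-z) ∪ Set.Icc (-z) z) ∪ Set.Icc z (z + c) := by
    rintro x ⟨hx1, hx2⟩
    rcases le_total x (-z) with h | h
    · exact Or.inl (Or.inl ⟨hx1, h⟩)
    rcases le_total x z with h' | h'
    · exact Or.inl (Or.inr ⟨h, h'⟩)
    · exact Or.inr ⟨h', hx2⟩
  have hmono1 : ν (Set.Icc (z - c) z) ≤ ν (Set.Icc (-z) z) :=
    measure_mono (Set.Icc_subset_Icc (by linarith) le_rfl)
  have hmono2 : ν (Set.Icc (-z) (-z + c)) ≤ ν (Set.Icc (-z) z) :=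
    measure_mono (Set.Icc_subset_Icc le_rfl (by linarith))
  have key : ν (Set.Icc (-(z + c)) (z + c)) ≤
      ENNReal.ofReal β₂ * ν (Set.Icc (-z) z) + ν (Set.Icc (-z) z) +
        ENNReal.ofReal β₁ * ν (Set.Icc (-z) z) := by
    calc ν (Set.Icc (-(z + c)) (z + c))
        ≤ ν ((Set.Icc (-(z + c)) (-z) ∪ Set.Icc (-z) z) ∪ Set.Icc z (z + c)) :=
          measure_mono hsub
      _ ≤ ν (Set.Icc (-(z + c)) (-z) ∪ Set.Icc (-z) z) + ν (Set.Icc z (z + c)) :=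
          measure_union_le _ _
      _ ≤ (ν (Set.Icc (-(z + c)) (-z)) + ν (Set.Icc (-z) z)) + ν (Set.Icc z (z + c)) :=
          add_le_add_left (measure_union_le _ _) _
      _ ≤ (ENNReal.ofReal β₂ * ν (Set.Icc (-z) (-z + c)) + ν (Set.Icc (-z) z)) +
            ENNReal.ofReal β₁ * ν (Set.Icc (z - c) z) :=
          add_le_add (add_le_add h2 le_rfl) h1
      _ ≤ ENNReal.ofReal β₂ * ν (Set.Icc (-z) z) + ν (Set.Icc (-z) z) +
            ENNReal.ofReal β₁ * ν (Set.Icc (-z) z) :=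
          add_le_add (add_le_add (mul_le_mul_right hmono2 _) le_rfl) (mul_le_mul_right hmono1 _)
  have hfin : ν (Set.Icc (-z) z) ≠ ⊤ := (hν.icc_lt_top _ _).ne
  have hfin1 : ENNReal.ofReal β₂ * ν (Set.Icc (-z) z) ≠ ⊤ :=
    ENNReal.mul_ne_top ENNReal.ofReal_ne_top hfin
  have hfin2 : ENNReal.ofReal β₁ * ν (Set.Icc (-z) z) ≠ ⊤ :=
    ENNReal.mul_ne_top ENNReal.ofReal_ne_top hfin
  have h := ENNReal.toReal_mono (by
    exact ENNReal.add_ne_top.2 ⟨ENNReal.add_ne_top.2 ⟨hfin1, hfin⟩, hfin2⟩) key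
  rw [ENNReal.toReal_add (ENNReal.add_ne_top.2 ⟨hfin1, hfin⟩) hfin2,
    ENNReal.toReal_add hfin1 hfin, ENNReal.toReal_mul, ENNReal.toReal_mul,
    ENNReal.toReal_ofReal hβ₂.le, ENNReal.toReal_ofReal hβ₁.le] at h
  have ht : (0:ℝ) ≤ (ν (Set.Icc (-z) z)).toReal := ENNReal.toReal_nonneg
  nlinarith [h]

lemma erg_translate {μ ν : Measure ℝ} (hμ : InM μ) (hν : InM ν) (hμ1 : M1 μ) (hν1 : M1 ν)
    (φ : ℝ → Fin n → ℝ) (hφ : Erg μ ν φ) (a : ℝ) : Erg μ ν (fun t => φ (t + a)) := by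
  obtain ⟨⟨hφc, C, hC⟩, hT⟩ := hφ
  have hφc' : Continuous fun t => φ (t + a) := hφc.comp (continuous_add_right a)
  refine ⟨⟨hφc', C, fun t => hC _⟩, ?_⟩
  set c : ℝ := |a| with hcdef
  have hc : 0 ≤ c := abs_nonneg a
  obtain ⟨β, hβ, K, hK, hbound⟩ := lint_translate hμ hμ1 a C φ hφc hC
  obtain ⟨Cr, hCr, Z, hratio⟩ := nu_ratio hν hν1 c hc
  have htop := nu_toReal_top hν
  have hint : ∀ (ψ : ℝ → Fin n → ℝ), Continuous ψ → ∀ s : Set ℝ,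
      ∫ t in s, ‖ψ t‖ ∂μ = (∫⁻ t in s, ENNReal.ofReal ‖ψ t‖ ∂μ).toReal := fun ψ hψ s =>
    integral_eq_lintegral_of_nonneg_ae (Filter.Eventually.of_forall fun t => norm_nonneg _)
      (hψ.norm.aestronglyMeasurable)
  have hLfin : ∀ w : ℝ, ∫⁻ t in Set.Icc (-w) w, ENNReal.ofReal ‖φ t‖ ∂μ ≠ ⊤ := by
    intro w
    have h1 : ∫⁻ t in Set.Icc (-w) w, ENNReal.ofReal ‖φ t‖ ∂μ ≤
        ∫⁻ _ in Set.Icc (-w) w, ENNReal.ofReal C ∂μ :=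
      lintegral_mono fun x => ENNReal.ofReal_le_ofReal (hC x)
    rw [setLIntegral_const] at h1
    exact ne_top_of_le_ne_top
      (ENNReal.mul_ne_top ENNReal.ofReal_ne_top (hμ.icc_lt_top _ _).ne) h1
  -- the dominating function
  set G : ℝ → ℝ := fun z => β * Cr *
      ((ν (Set.Icc (-(z + c)) (z + c))).toReal⁻¹ *
        ∫ t in Set.Icc (-(z + c)) (z + c), ‖φ t‖ ∂μ) +
      K.toReal * (ν (Set.Icc (-z) z)).toReal⁻¹ with hGdef
  have hG : Filter.Tendsto G Filter.atTop (nhds 0) := by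
    have h1 : Filter.Tendsto (fun z : ℝ =>
        (ν (Set.Icc (-(z + c)) (z + c))).toReal⁻¹ *
          ∫ t in Set.Icc (-(z + c)) (z + c), ‖φ t‖ ∂μ) Filter.atTop (nhds 0) :=
      hT.comp (tendsto_atTop_add_const_right Filter.atTop c Filter.tendsto_id)
    have h2 : Filter.Tendsto (fun z : ℝ => (ν (Set.Icc (-z) z)).toReal⁻¹)
        Filter.atTop (nhds 0) := htop.inv_tendsto_atTop
    have h3 := (h1.const_mul (β * Cr)).add (h2.const_mul K.toReal)
    simp only [mul_zero, add_zero] at h3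
    exact h3
  refine tendsto_of_tendsto_of_tendsto_of_le_of_le' tendsto_const_nhds hG ?_ ?_
  · filter_upwards with z
    exact mul_nonneg (inv_nonneg.2 ENNReal.toReal_nonneg)
      (integral_nonneg fun t => norm_nonneg _)
  · filter_upwards [Filter.eventually_ge_atTop Z, htop.eventually_ge_atTop 1] with z hzZ hz1
    set A : ℝ := (ν (Set.Icc (-z) z)).toReal with hAdef
    set B : ℝ := (ν (Set.Icc (-(z + c)) (z + c))).toReal with hBdef
    have hApos : 0 < A := lt_of_lt_of_le one_pos hz1
    have hAB : A ≤ B :=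
      ENNReal.toReal_mono (hν.icc_lt_top _ _).ne
        (measure_mono (Set.Icc_subset_Icc (by linarith) (by linarith)))
    have hBpos : 0 < B := hApos.trans_le hAB
    have hBA : B ≤ Cr * A := hratio z hzZ
    set Lb : ℝ := (∫⁻ t in Set.Icc (-(z + c)) (z + c), ENNReal.ofReal ‖φ t‖ ∂μ).toReal with hLbdef
    have hLb0 : 0 ≤ Lb := ENNReal.toReal_nonneg
    have hL' : (∫⁻ t in Set.Icc (-z) z, ENNReal.ofReal ‖φ (t + a)‖ ∂μ).toReal ≤
        β * Lb + K.toReal := by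
      have h := ENNReal.toReal_mono (ENNReal.add_ne_top.2
        ⟨ENNReal.mul_ne_top ENNReal.ofReal_ne_top (hLfin (z + c)), hK⟩) (hbound z)
      rwa [ENNReal.toReal_add (ENNReal.mul_ne_top ENNReal.ofReal_ne_top (hLfin (z + c))) hK,
        ENNReal.toReal_mul, ENNReal.toReal_ofReal hβ.le] at h
    have hinv : A⁻¹ ≤ Cr * B⁻¹ := by
      rw [inv_eq_one_div, inv_eq_one_div, mul_one_div, div_le_div_iff₀ hApos hBpos]
      linarith
    have hgoal : A⁻¹ * ∫ t in Set.Icc (-z) z, ‖(fun t => φ (t + a)) t‖ ∂μ ≤ G z := by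
      rw [hint _ hφc' (Set.Icc (-z) z)]
      have hstep : A⁻¹ * (∫⁻ t in Set.Icc (-z) z, ENNReal.ofReal ‖φ (t + a)‖ ∂μ).toReal ≤
          A⁻¹ * (β * Lb + K.toReal) :=
        mul_le_mul_of_nonneg_left hL' (inv_nonneg.2 ENNReal.toReal_nonneg)
      refine le_trans hstep ?_
      have h3 : A⁻¹ * Lb ≤ Cr * (B⁻¹ * Lb) := by
        calc A⁻¹ * Lb ≤ (Cr * B⁻¹) * Lb := mul_le_mul_of_nonneg_right hinv hLb0
          _ = Cr * (B⁻¹ * Lb) := by ring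
      have hKnn : 0 ≤ K.toReal := ENNReal.toReal_nonneg
      have hinvA : 0 ≤ A⁻¹ := inv_nonneg.2 ENNReal.toReal_nonneg
      rw [hGdef]
      simp only
      rw [hint _ hφc (Set.Icc (-(z + c)) (z + c)), ← hBdef, ← hLbdef]
      calc A⁻¹ * (β * Lb + K.toReal) = β * (A⁻¹ * Lb) + K.toReal * A⁻¹ := by ring
        _ ≤ β * (Cr * (B⁻¹ * Lb)) + K.toReal * A⁻¹ :=
            add_le_add_left (mul_le_mul_of_nonneg_left h3 hβ.le) _
        _ = β * Cr * (B⁻¹ * Lb) + K.toReal * A⁻¹ := by ring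
    exact hgoal

lemma ap_translate {E : Type*} [NormedAddCommGroup E] {g : ℝ → E} (hg : AP g) (a : ℝ) :
    AP (fun t => g (t + a)) := by
  refine ⟨hg.1.comp (continuous_add_right a), fun ε hε => ?_⟩
  obtain ⟨l, hl, h⟩ := hg.2 ε hε
  refine ⟨l, hl, fun b => ?_⟩
  obtain ⟨τ, hτ, hτ'⟩ := h b
  refine ⟨τ, hτ, fun t => ?_⟩
  have h2 := hτ' (t + a)
  have e : t + a + τ = t + τ + a := by ring
  rw [e] at h2
  exact h2

lemma bc_translate {E : Type*} [NormedAddCommGroup E] {f : ℝ → E} (hf : BC f) (a : ℝ) :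
    BC (fun t => f (t + a)) := by
  obtain ⟨hc, C, hC⟩ := hf
  exact ⟨hc.comp (continuous_add_right a), C, fun t => hC _⟩

end Aux2

theorem pap_translation_invariant {n : ℕ} (μ ν : Measure ℝ)
    (hμ : InM μ) (hν : InM ν) (hμ1 : M1 μ) (hν1 : M1 ν) (hM2 : M2 μ ν)
    (f : ℝ → (Fin n → ℝ)) (hf : PAP μ ν f) (a : ℝ) :
    PAP μ ν (fun t => f (t + a)) := by
  obtain ⟨hbc, g, φ, hg, hφ, hsum⟩ := hf
  exact ⟨bc_translate hbc a, (fun t => g (t + a)), (fun t => φ (t + a)),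
    ap_translate hg a, erg_translate hμ hν hμ1 hν1 φ hφ a, fun t => hsum (t + a)⟩
end
end

section
/- Let μ, ν ∈ 𝓜 satisfy condition (M.2), let p > 1, and let L : ℝ → [0,∞) be measurable with ∫_ℝ L(t)^p dμ(t) < ∞. Then lim_{z→+∞} (1/ν([−z,z])) ∫_{−z}^{z} L(t) dμ(t) = 0. Consequently, every bounded continuous function h : ℝ → ℝ for which there is a constant C ≥ 0 with |h(t)| ≤ C·L(t) for all t ∈ ℝ belongs to 𝓔(ℝ,ℝ,μ,ν). -/
open MeasureTheory Filter Topology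
open scoped ENNReal

noncomputable section

lemma nu_toReal_atTop (ν : Measure ℝ) (hν : InM ν) :
    Tendsto (fun z : ℝ => (ν (Set.Icc (-z) z)).toReal) atTop atTop := by
  rw [tendsto_atTop]
  intro M
  have hUnion : (⋃ n : ℕ, Set.Icc (-(n : ℝ)) n) = Set.univ := by
    ext x
    simp only [Set.mem_iUnion, Set.mem_univ, iff_true, Set.mem_Icc]
    obtain ⟨n, hn⟩ := exists_nat_ge |x|
    have h := abs_le.mp hn
    exact ⟨n, h.1, h.2⟩
  have hdir : Directed (· ⊆ ·) (fun n : ℕ => Set.Icc (-(n : ℝ)) n) := by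
    intro m n
    refine ⟨max m n, Set.Icc_subset_Icc ?_ ?_, Set.Icc_subset_Icc ?_ ?_⟩ <;>
      simp [neg_le_neg_iff, Nat.cast_le, le_max_left, le_max_right]
  have hsup : (⨆ n : ℕ, ν (Set.Icc (-(n : ℝ)) n)) = ⊤ := by
    rw [← hdir.measure_iUnion, hUnion, hν.1]
  obtain ⟨n, hn⟩ : ∃ n : ℕ, ENNReal.ofReal (max M 0) < ν (Set.Icc (-(n : ℝ)) n) := by
    have : ENNReal.ofReal (max M 0) < ⨆ n : ℕ, ν (Set.Icc (-(n : ℝ)) n) := by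
      rw [hsup]; exact ENNReal.ofReal_lt_top
    exact lt_iSup_iff.mp this
  filter_upwards [eventually_ge_atTop (n : ℝ)] with z hz
  have hn0 : (0 : ℝ) ≤ n := Nat.cast_nonneg n
  have hsub : Set.Icc (-(n : ℝ)) n ⊆ Set.Icc (-z) z :=
    Set.Icc_subset_Icc (by linarith) hz
  have h1 : ENNReal.ofReal (max M 0) ≤ ν (Set.Icc (-z) z) :=
    le_trans hn.le (measure_mono hsub)
  have h2 : ν (Set.Icc (-z) z) ≠ ⊤ := (hν.2 _ _ (by linarith)).ne
  calc M ≤ max M 0 := le_max_left _ _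
    _ = (ENNReal.ofReal (max M 0)).toReal := by
        rw [ENNReal.toReal_ofReal (le_max_right _ _)]
    _ ≤ (ν (Set.Icc (-z) z)).toReal := ENNReal.toReal_mono h2 h1

theorem lp_implies_ergodic (μ ν : Measure ℝ) (hμ : InM μ) (hν : InM ν) (hM2 : M2 μ ν)
    (p : ℝ) (hp : 1 < p) (L : ℝ → ℝ) (hLmeas : Measurable L)
    (hLnonneg : ∀ t, 0 ≤ L t) (hLp : Integrable (fun t => L t ^ p) μ) :
    Filter.Tendsto (fun z : ℝ =>
        ((ν (Set.Icc (-z) z)).toReal)⁻¹ * ∫ t in Set.Icc (-z) z, L t ∂μ)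
      Filter.atTop (nhds 0) ∧
    ∀ h : ℝ → ℝ, BC h → ∀ C : ℝ, 0 ≤ C → (∀ t, |h t| ≤ C * L t) → Erg μ ν h := by
  set q := p.conjExponent with hq_def
  have hpq : p.HolderConjugate q := Real.HolderConjugate.conjExponent hp
  have hp0 : (0 : ℝ) < p := hpq.pos
  have hq0 : (0 : ℝ) < q := hpq.symm.pos
  set S : ℝ → Set ℝ := fun z => Set.Icc (-z) z with hS_def
  -- the Lᵖ lintegral is finite
  set I : ℝ≥0∞ := ∫⁻ t, ENNReal.ofReal (L t) ^ p ∂μ with hI_def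
  have hI_eq : I = ∫⁻ t, ENNReal.ofReal (L t ^ p) ∂μ := by
    refine lintegral_congr fun t => ?_
    rw [ENNReal.ofReal_rpow_of_nonneg (hLnonneg t) hp0.le]
  have hI_lt : I < ⊤ := by
    rw [hI_eq]
    have := hLp.hasFiniteIntegral
    rwa [hasFiniteIntegral_iff_ofReal (Eventually.of_forall fun t =>
      Real.rpow_nonneg (hLnonneg t) p)] at this
  set K : ℝ≥0∞ := I ^ (1 / p) with hK_def
  have hK_ne : K ≠ ⊤ := (ENNReal.rpow_lt_top_of_nonneg (by positivity) hI_lt.ne).ne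
  -- Hölder bound for every z
  have hHolder : ∀ z : ℝ, (∫⁻ t in S z, ENNReal.ofReal (L t) ∂μ) ≤ K * (μ (S z)) ^ (1 / q) := by
    intro z
    have hH := ENNReal.lintegral_mul_le_Lp_mul_Lq (μ.restrict (S z)) hpq
      (ENNReal.measurable_ofReal.comp hLmeas).aemeasurable
      (aemeasurable_const : AEMeasurable (fun _ : ℝ => (1 : ℝ≥0∞)) _)
    simp only [Pi.mul_apply, mul_one, ENNReal.one_rpow, lintegral_const,
      Measure.restrict_apply_univ, one_mul] at hH
    refine le_trans hH ?_
    gcongr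
    exact ENNReal.rpow_le_rpow (setLIntegral_le_lintegral _ _) (by positivity)
  -- finiteness of the restricted lintegral of L
  have hG_lt : ∀ z : ℝ, (∫⁻ t in S z, ENNReal.ofReal (L t) ∂μ) < ⊤ := by
    intro z
    rcases le_or_gt (-z) z with hz | hz
    · refine lt_of_le_of_lt (hHolder z) ?_
      exact ENNReal.mul_lt_top hK_ne.lt_top
        (ENNReal.rpow_lt_top_of_nonneg (by positivity) (hμ.2 _ _ hz).ne)
    · have : S z = ∅ := Set.Icc_eq_empty (not_le.mpr hz)
      simp [this]
  -- integrability of L on S z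
  have hLint : ∀ z : ℝ, Integrable L (μ.restrict (S z)) := by
    intro z
    refine ⟨hLmeas.aestronglyMeasurable, ?_⟩
    rw [hasFiniteIntegral_iff_ofReal (Eventually.of_forall hLnonneg)]
    exact hG_lt z
  -- the real integral equals toReal of the lintegral
  have hint_eq : ∀ z : ℝ, (∫ t in S z, L t ∂μ) =
      (∫⁻ t in S z, ENNReal.ofReal (L t) ∂μ).toReal := fun z =>
    integral_eq_lintegral_of_nonneg_ae (Eventually.of_forall hLnonneg)
      hLmeas.aestronglyMeasurable
  -- constant from (M.2)
  obtain ⟨c, hc1, hc2⟩ := exists_between hM2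
  have hc_ne : c ≠ ⊤ := hc2.ne
  have hev_ratio : ∀ᶠ z in atTop, μ (S z) / ν (S z) < c :=
    eventually_lt_of_limsup_lt hc1
  have hνatTop := nu_toReal_atTop ν hν
  have hev_ge1 : ∀ᶠ z in atTop, 1 ≤ (ν (S z)).toReal := hνatTop.eventually_ge_atTop 1
  -- main eventual bound
  set A : ℝ := K.toReal * c.toReal ^ (1 / q) with hA_def
  have hexp : 1 / q - 1 = -(1 / p) := by
    have := hpq.inv_add_inv_eq_one
    rw [one_div, one_div]; linarith
  have hmain : ∀ᶠ z in atTop,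
      ((ν (S z)).toReal)⁻¹ * ∫ t in S z, L t ∂μ ≤ A * (ν (S z)).toReal ^ (-(1 / p)) := by
    filter_upwards [hev_ratio, hev_ge1, eventually_ge_atTop (0 : ℝ)] with z hz1 hz2 hz3
    have hzIcc : -z ≤ z := by linarith
    have hn_ne_top : ν (S z) ≠ ⊤ := (hν.2 _ _ hzIcc).ne
    have hn_ne0 : ν (S z) ≠ 0 := by
      intro h0
      rw [h0] at hz2; norm_num at hz2
    have hm_le : μ (S z) ≤ c * ν (S z) :=
      ((ENNReal.div_lt_iff (Or.inl hn_ne0) (Or.inl hn_ne_top)).mp hz1).le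
    have hbound : (∫⁻ t in S z, ENNReal.ofReal (L t) ∂μ) ≤ K * (c * ν (S z)) ^ (1 / q) :=
      le_trans (hHolder z) (by gcongr)
    have hrhs_ne : K * (c * ν (S z)) ^ (1 / q) ≠ ⊤ :=
      (ENNReal.mul_lt_top hK_ne.lt_top
        (ENNReal.rpow_lt_top_of_nonneg (by positivity)
          (ENNReal.mul_ne_top hc_ne hn_ne_top))).ne
    have hnpos : (0 : ℝ) < (ν (S z)).toReal := by linarith
    have h2 : (∫ t in S z, L t ∂μ) ≤ (K * (c * ν (S z)) ^ (1 / q)).toReal := by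
      rw [hint_eq z]
      exact ENNReal.toReal_mono hrhs_ne hbound
    have h3 : (K * (c * ν (S z)) ^ (1 / q)).toReal
        = K.toReal * (c.toReal * (ν (S z)).toReal) ^ (1 / q) := by
      rw [ENNReal.toReal_mul]
      congr 1
      rw [← ENNReal.toReal_mul, ENNReal.toReal_rpow]
    calc ((ν (S z)).toReal)⁻¹ * ∫ t in S z, L t ∂μ
        ≤ ((ν (S z)).toReal)⁻¹ * (K.toReal * (c.toReal * (ν (S z)).toReal) ^ (1 / q)) := by
          rw [← h3]
          exact mul_le_mul_of_nonneg_left h2 (by positivity)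
      _ = A * (ν (S z)).toReal ^ (-(1 / p)) := by
          rw [Real.mul_rpow ENNReal.toReal_nonneg ENNReal.toReal_nonneg, ← hexp]
          rw [Real.rpow_sub hnpos, Real.rpow_one]
          rw [hA_def]
          field_simp
  have hnonneg : ∀ z : ℝ, 0 ≤ ((ν (S z)).toReal)⁻¹ * ∫ t in S z, L t ∂μ := by
    intro z
    exact mul_nonneg (by positivity) (integral_nonneg hLnonneg)
  have htend0 : Tendsto (fun z : ℝ => A * (ν (S z)).toReal ^ (-(1 / p))) atTop (𝓝 0) := by
    have h1 : Tendsto (fun x : ℝ => x ^ (-(1 / p))) atTop (𝓝 0) :=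
      tendsto_rpow_neg_atTop (by positivity)
    have := (h1.comp hνatTop).const_mul A
    simpa using this
  have hpart1 : Tendsto (fun z : ℝ =>
      ((ν (S z)).toReal)⁻¹ * ∫ t in S z, L t ∂μ) atTop (𝓝 0) :=
    squeeze_zero' (Eventually.of_forall hnonneg) hmain htend0
  refine ⟨hpart1, ?_⟩
  intro h hBC C hC hCL
  refine ⟨hBC, ?_⟩
  have hnormint : ∀ z : ℝ, (∫ t in S z, ‖h t‖ ∂μ) ≤ C * ∫ t in S z, L t ∂μ := by
    intro z
    rw [← integral_const_mul]
    refine integral_mono_of_nonneg (Eventually.of_forall fun t => norm_nonneg _)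
      ((hLint z).const_mul C) (Eventually.of_forall fun t => ?_)
    simpa [Real.norm_eq_abs] using hCL t
  have hb : ∀ᶠ z in atTop,
      ((ν (S z)).toReal)⁻¹ * ∫ t in S z, ‖h t‖ ∂μ ≤
        C * (((ν (S z)).toReal)⁻¹ * ∫ t in S z, L t ∂μ) := by
    refine Eventually.of_forall fun z => ?_
    rw [← mul_assoc, mul_comm C, mul_assoc]
    exact mul_le_mul_of_nonneg_left (hnormint z) (by positivity)
  have hbnn : ∀ᶠ z in atTop, 0 ≤ ((ν (S z)).toReal)⁻¹ * ∫ t in S z, ‖h t‖ ∂μ :=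
    Eventually.of_forall fun z =>
      mul_nonneg (by positivity) (integral_nonneg fun t => norm_nonneg _)
  have : Tendsto (fun z : ℝ => C * (((ν (S z)).toReal)⁻¹ * ∫ t in S z, L t ∂μ))
      atTop (𝓝 0) := by simpa using hpart1.const_mul C
  exact squeeze_zero' hbnn hb this
end
end

section
/- Let μ ∈ 𝓜 and let p > 1. Let Λ : ℝ×ℝ → ℝ be continuous, almost periodic in t uniformly in x on compact sets, and Lipschitz in the second variable with a positive continuous function L^Λ : ℝ → (0,∞) satisfying ∫_ℝ L^Λ(t)^p dμ(t) < ∞ and |Λ(t,u) − Λ(t,v)| ≤ L^Λ(t)|u−v| for all t, u, v ∈ ℝ. Then for every y ∈ 𝓟𝓐𝓟(ℝ,ℝ,μ) := 𝓟𝓐𝓟(ℝ,ℝ,μ,μ) and every θ ∈ ℝ, the function s ↦ Λ(s, y(s−θ)) belongs to 𝓟𝓐𝓟(ℝ,ℝ,μ). -/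
open MeasureTheory Filter Topology

noncomputable section

/-- Almost periodic in `t`, uniformly with respect to `x` in compact sets. -/
def APU (F : ℝ → ℝ → ℝ) : Prop :=
  Continuous (fun p : ℝ × ℝ => F p.1 p.2) ∧
  ∀ K : Set ℝ, IsCompact K → ∀ ε : ℝ, 0 < ε → ∃ l : ℝ, 0 < l ∧ ∀ a : ℝ,
    ∃ τ ∈ Set.Icc a (a + l), ∀ t : ℝ, ∀ x ∈ K, |F (t + τ) x - F t x| < ε

/-- Uniformly ergodic (with respect to compact sets in the second variable). -/
def ErgU (μ ν : Measure ℝ) (H : ℝ → ℝ → ℝ) : Prop :=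
  ∀ K : Set ℝ, IsCompact K →
    Filter.Tendsto (fun z : ℝ =>
        ((ν (Set.Icc (-z) z)).toReal)⁻¹ *
          ∫ t in Set.Icc (-z) z, (⨆ x : K, |H t (x : ℝ)|) ∂μ)
      Filter.atTop (nhds 0)

/-- `(μ,ν)`-pseudo almost periodic in `t` uniformly in `x`. -/
def PAPU (μ ν : Measure ℝ) (F : ℝ → ℝ → ℝ) : Prop :=
  ∃ G H : ℝ → ℝ → ℝ, APU G ∧ Continuous (fun p : ℝ × ℝ => H p.1 p.2) ∧
    ErgU μ ν H ∧ ∀ t x, F t x = G t x + H t x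

/-- An apu function is bounded on `ℝ × K` for compact `K`. -/
lemma apu_bounded {Λ : ℝ → ℝ → ℝ} (h : APU Λ) {K : Set ℝ} (hK : IsCompact K) :
    ∃ B : ℝ, 0 ≤ B ∧ ∀ t : ℝ, ∀ x ∈ K, |Λ t x| ≤ B := by
  obtain ⟨l, hl, hper⟩ := h.2 K hK 1 one_pos
  have hcomp : IsCompact ((Set.Icc (0:ℝ) l) ×ˢ K) := isCompact_Icc.prod hK
  have hcont : Continuous (fun q : ℝ × ℝ => |Λ q.1 q.2|) := h.1.abs
  obtain ⟨B0, hB0⟩ : ∃ B0 : ℝ, ∀ q ∈ (Set.Icc (0:ℝ) l) ×ˢ K, |Λ q.1 q.2| ≤ B0 := by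
    rcases (hcomp.image hcont).isBounded.subset_closedBall 0 with ⟨r, hr⟩
    refine ⟨r, fun q hq => ?_⟩
    have := hr (Set.mem_image_of_mem _ hq)
    rw [Metric.mem_closedBall, Real.dist_eq, sub_zero] at this
    exact le_trans (le_abs_self _) this
  refine ⟨max B0 0 + 1, by positivity, fun t x hx => ?_⟩
  obtain ⟨τ, hτ, hτ'⟩ := hper (-t)
  have h1 : 0 ≤ t + τ := by linarith [hτ.1]
  have h2 : t + τ ≤ l := by linarith [hτ.2]
  have hmem : ((t + τ, x) : ℝ × ℝ) ∈ (Set.Icc (0:ℝ) l) ×ˢ K := ⟨⟨h1, h2⟩, hx⟩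
  have hBval : |Λ (t + τ) x| ≤ max B0 0 := le_max_of_le_left (hB0 _ hmem)
  have hdiff : |Λ (t + τ) x - Λ t x| < 1 := hτ' t x hx
  have htri : |Λ t x| - |Λ (t + τ) x| ≤ |Λ t x - Λ (t + τ) x| :=
    abs_sub_abs_le_abs_sub _ _
  rw [abs_sub_comm] at htri
  linarith

theorem composition_pap_single_measure (μ : Measure ℝ) (hμ : InM μ)
    (p : ℝ) (hp : 1 < p)
    (Λ : ℝ → ℝ → ℝ) (hΛapu : APU Λ)
    (LΛ : ℝ → ℝ) (hLcont : Continuous LΛ) (hLpos : ∀ t, 0 < LΛ t)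
    (hLp : Integrable (fun t => LΛ t ^ p) μ)
    (hLip : ∀ t u v : ℝ, |Λ t u - Λ t v| ≤ LΛ t * |u - v|)
    (y : ℝ → ℝ) (hy : PAP μ μ y) (θ : ℝ) :
    PAP μ μ (fun s => Λ s (y (s - θ))) := by
  classical
  -- μ is finite on compacts
  haveI : IsFiniteMeasureOnCompacts μ := by
    constructor
    intro K hK
    rcases hK.isBounded.subset_closedBall 0 with ⟨r, hr⟩
    have hsub : K ⊆ Set.Icc (-(max r 0)) (max r 0) := by
      intro x hx
      have hx' := hr hx
      rw [Metric.mem_closedBall, Real.dist_eq, sub_zero] at hx'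
      have h1 := abs_le.1 hx'
      constructor
      · have : -(max r 0) ≤ -r := neg_le_neg (le_max_left _ _)
        linarith [h1.1]
      · exact h1.2.trans (le_max_left _ _)
    exact lt_of_le_of_lt (measure_mono hsub) (hμ.2 _ _ (neg_le_self (le_max_right r 0)))
  -- μ([-z,z]).toReal → ∞
  have hμtop : Tendsto (fun z : ℝ => (μ (Set.Icc (-z) z)).toReal) atTop atTop := by
    rw [tendsto_atTop]
    intro b
    have hmono : Monotone (fun n : ℕ => Set.Icc (-(n:ℝ)) (n:ℝ)) := fun m n hmn =>
      Set.Icc_subset_Icc (neg_le_neg (by exact_mod_cast hmn)) (by exact_mod_cast hmn)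
    have hun : (⋃ n : ℕ, Set.Icc (-(n:ℝ)) (n:ℝ)) = Set.univ := by
      ext x
      simp only [Set.mem_iUnion, Set.mem_univ, iff_true, Set.mem_Icc]
      obtain ⟨n, hn⟩ := exists_nat_ge |x|
      obtain ⟨h1, h2⟩ := abs_le.1 hn
      exact ⟨n, h1, h2⟩
    have htend := tendsto_measure_iUnion_atTop (μ := μ) hmono
    rw [hun, hμ.1] at htend
    have hb : ∀ᶠ n : ℕ in atTop, ENNReal.ofReal b < μ (Set.Icc (-(n:ℝ)) (n:ℝ)) := by
      have := htend.eventually_const_lt (ENNReal.ofReal_lt_top (r := b))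
      exact this
    obtain ⟨n, hn⟩ := hb.exists
    filter_upwards [eventually_ge_atTop (n : ℝ)] with z hz
    have hzn : (0:ℝ) ≤ z := le_trans (Nat.cast_nonneg n) hz
    have hsub : Set.Icc (-(n:ℝ)) (n:ℝ) ⊆ Set.Icc (-z) z :=
      Set.Icc_subset_Icc (neg_le_neg hz) hz
    have hle : ENNReal.ofReal b ≤ μ (Set.Icc (-z) z) := le_trans hn.le (measure_mono hsub)
    have hfin : μ (Set.Icc (-z) z) ≠ ⊤ := (hμ.2 _ _ (by linarith)).ne
    exact (ENNReal.ofReal_le_iff_le_toReal hfin).1 hle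
  -- bound for y
  obtain ⟨hycont, Cy, hCy⟩ := hy.1
  set M : ℝ := max Cy 0 with hM
  have hM0 : 0 ≤ M := le_max_right _ _
  have hyM : ∀ t, |y t| ≤ M :=
    fun t => le_trans (by simpa [Real.norm_eq_abs] using hCy t) (le_max_left _ _)
  -- continuity of the composite
  have hfc : Continuous (fun s => Λ s (y (s - θ))) :=
    hΛapu.1.comp (continuous_id.prodMk (hycont.comp (continuous_sub_right θ)))
  -- global bound on Λ over ℝ × [-M, M]
  obtain ⟨B, hB0, hB⟩ := apu_bounded hΛapu (isCompact_Icc (a := -M) (b := M))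
  have hmemK : ∀ s : ℝ, y (s - θ) ∈ Set.Icc (-M) M :=
    fun s => Set.mem_Icc.2 (abs_le.1 (hyM _))
  have h0K : (0:ℝ) ∈ Set.Icc (-M) M := ⟨neg_nonpos.2 hM0, hM0⟩
  have hfB : ∀ s, |Λ s (y (s - θ))| ≤ B := fun s => hB s _ (hmemK s)
  have hgB : ∀ s, |Λ s 0| ≤ B := fun s => hB s 0 h0K
  refine ⟨⟨hfc, B, fun t => by simpa [Real.norm_eq_abs] using hfB t⟩, ?_⟩
  -- decomposition
  refine ⟨fun s => Λ s 0, fun s => Λ s (y (s - θ)) - Λ s 0, ?_, ?_, fun t => by ring⟩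
  · -- AP part
    refine ⟨hΛapu.1.comp (continuous_id.prodMk continuous_const), fun ε hε => ?_⟩
    obtain ⟨l, hl, hper⟩ := hΛapu.2 {0} isCompact_singleton ε hε
    refine ⟨l, hl, fun a => ?_⟩
    obtain ⟨τ, hτ, hτ'⟩ := hper a
    exact ⟨τ, hτ, fun t => by simpa [Real.norm_eq_abs] using hτ' t 0 rfl⟩
  · -- ergodic part
    set φ : ℝ → ℝ := fun s => Λ s (y (s - θ)) - Λ s 0 with hφdef
    have hφc : Continuous φ := hfc.sub (hΛapu.1.comp (continuous_id.prodMk continuous_const))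
    have hφbd : ∀ s, |φ s| ≤ M * LΛ s := by
      intro s
      have h := hLip s (y (s - θ)) 0
      simp only [sub_zero] at h
      calc |φ s| ≤ LΛ s * |y (s - θ)| := h
        _ ≤ LΛ s * M := mul_le_mul_of_nonneg_left (hyM _) (hLpos s).le
        _ = M * LΛ s := mul_comm _ _
    refine ⟨⟨hφc, 2 * B, fun t => ?_⟩, ?_⟩
    · simp only [Real.norm_eq_abs]
      calc |φ t| ≤ |Λ t (y (t - θ))| + |Λ t 0| := abs_sub _ _
        _ ≤ B + B := add_le_add (hfB t) (hgB t)
        _ = 2 * B := by ring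
    · -- the limit
      set m : ℝ → ℝ := fun z => (μ (Set.Icc (-z) z)).toReal with hmdef
      set C0 : ℝ := ∫ t, LΛ t ^ p ∂μ with hC0
      have hC0nn : 0 ≤ C0 := integral_nonneg fun t => Real.rpow_nonneg (hLpos t).le p
      rw [NormedAddCommGroup.tendsto_nhds_zero]
      intro ε hε
      set δ : ℝ := ε / (2 * (M + 1)) with hδ
      have hδ0 : 0 < δ := div_pos hε (by positivity)
      set c : ℝ := δ ^ (p - 1) with hc
      have hc0 : 0 < c := Real.rpow_pos_of_pos hδ0 _
      -- pointwise bound LΛ t ≤ δ + LΛ t ^ p / c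
      have hpt : ∀ t, LΛ t ≤ δ + LΛ t ^ p / c := by
        intro t
        rcases le_or_gt (LΛ t) δ with h | h
        · have : 0 ≤ LΛ t ^ p / c := div_nonneg (Real.rpow_nonneg (hLpos t).le p) hc0.le
          linarith
        · have hL0 : 0 < LΛ t := hLpos t
          have h1 : c ≤ LΛ t ^ (p - 1) :=
            Real.rpow_le_rpow hδ0.le h.le (by linarith)
          have h2 : LΛ t * c ≤ LΛ t ^ p := by
            calc LΛ t * c ≤ LΛ t * LΛ t ^ (p - 1) :=
                  mul_le_mul_of_nonneg_left h1 hL0.le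
              _ = LΛ t ^ (1:ℝ) * LΛ t ^ (p - 1) := by rw [Real.rpow_one]
              _ = LΛ t ^ p := by rw [← Real.rpow_add hL0]; ring_nf
          have h3 : LΛ t ≤ LΛ t ^ p / c := (le_div_iff₀ hc0).2 h2
          linarith
      -- integral bound on each interval
      have key : ∀ z : ℝ, 0 ≤ z →
          ∫ t in Set.Icc (-z) z, |φ t| ∂μ ≤ M * δ * m z + M * (C0 / c) := by
        intro z hz
        have hint1 : IntegrableOn (fun t => |φ t|) (Set.Icc (-z) z) μ :=
          hφc.abs.integrableOn_Icc
        have hintL : IntegrableOn LΛ (Set.Icc (-z) z) μ := hLcont.integrableOn_Icc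
        have hintLp : IntegrableOn (fun t => LΛ t ^ p) (Set.Icc (-z) z) μ :=
          hLp.integrableOn
        have hconst : IntegrableOn (fun _ => δ) (Set.Icc (-z) z) μ :=
          integrableOn_const isCompact_Icc.measure_lt_top.ne
        have step1 : ∫ t in Set.Icc (-z) z, |φ t| ∂μ ≤
            ∫ t in Set.Icc (-z) z, M * LΛ t ∂μ := by
          apply setIntegral_mono_on hint1 (hintL.const_mul M) measurableSet_Icc
          intro t _
          exact hφbd t
        have step2 : ∫ t in Set.Icc (-z) z, M * LΛ t ∂μ =
            M * ∫ t in Set.Icc (-z) z, LΛ t ∂μ := integral_const_mul _ _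
        have step3 : ∫ t in Set.Icc (-z) z, LΛ t ∂μ ≤ δ * m z + C0 / c := by
          have hb : ∫ t in Set.Icc (-z) z, LΛ t ∂μ ≤
              ∫ t in Set.Icc (-z) z, (δ + LΛ t ^ p / c) ∂μ := by
            apply setIntegral_mono_on hintL (hconst.add (hintLp.div_const c)) measurableSet_Icc
            intro t _
            exact hpt t
          have hsplit : ∫ t in Set.Icc (-z) z, (δ + LΛ t ^ p / c) ∂μ =
              δ * m z + (∫ t in Set.Icc (-z) z, LΛ t ^ p ∂μ) / c := by
            rw [integral_add hconst (hintLp.div_const c), setIntegral_const,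
              integral_div, smul_eq_mul]
            simp only [hmdef, Measure.real]
            ring
          have hle : (∫ t in Set.Icc (-z) z, LΛ t ^ p ∂μ) ≤ C0 :=
            setIntegral_le_integral hLp
              (Filter.Eventually.of_forall fun t => Real.rpow_nonneg (hLpos t).le p)
          have hdivle : (∫ t in Set.Icc (-z) z, LΛ t ^ p ∂μ) / c ≤ C0 / c := by gcongr
          rw [hsplit] at hb
          linarith
        calc ∫ t in Set.Icc (-z) z, |φ t| ∂μ ≤ M * ∫ t in Set.Icc (-z) z, LΛ t ∂μ := by
              rw [← step2]; exact step1
          _ ≤ M * (δ * m z + C0 / c) := mul_le_mul_of_nonneg_left step3 hM0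
          _ = M * δ * m z + M * (C0 / c) := by ring
      -- conclude
      have hinv : Tendsto (fun z => (m z)⁻¹ * (M * (C0 / c))) atTop (𝓝 0) := by
        have h := hμtop.inv_tendsto_atTop
        simpa using h.mul_const (M * (C0 / c))
      have hMδ : M * δ < ε := by
        have h1 : M * δ ≤ (M + 1) * δ := by nlinarith
        have h2 : (M + 1) * δ = ε / 2 := by
          rw [hδ]; field_simp
        linarith
      have hev : ∀ᶠ z in atTop, (m z)⁻¹ * (M * (C0 / c)) < ε - M * δ :=
        hinv.eventually_lt_const (by linarith)
      filter_upwards [hev, hμtop.eventually_ge_atTop 1, eventually_ge_atTop (0:ℝ)]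
        with z hz1 hz2 hz3
      have hmz : (1:ℝ) ≤ m z := hz2
      have hmz0 : 0 < m z := lt_of_lt_of_le zero_lt_one hmz
      have hφnn : 0 ≤ ∫ t in Set.Icc (-z) z, |φ t| ∂μ :=
        integral_nonneg fun t => abs_nonneg _
      have hnorm : ∫ t in Set.Icc (-z) z, ‖φ t‖ ∂μ = ∫ t in Set.Icc (-z) z, |φ t| ∂μ := by
        simp [Real.norm_eq_abs]
      have hinvnn : (0:ℝ) ≤ (m z)⁻¹ := inv_nonneg.2 hmz0.le
      rw [Real.norm_eq_abs, hnorm, abs_of_nonneg (mul_nonneg hinvnn hφnn)]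
      have h1 : (m z)⁻¹ * ∫ t in Set.Icc (-z) z, |φ t| ∂μ ≤
          (m z)⁻¹ * (M * δ * m z + M * (C0 / c)) :=
        mul_le_mul_of_nonneg_left (key z hz3) hinvnn
      have h2 : (m z)⁻¹ * (M * δ * m z + M * (C0 / c)) =
          M * δ + (m z)⁻¹ * (M * (C0 / c)) := by
        field_simp
      linarith [h1, h2 ▸ h1, hz1]
end
end

section
/- Let μ, ν ∈ 𝓜 and let y, z ∈ 𝓟𝓐𝓟(ℝ,ℝ,μ,ν). Then the pointwise product y·z, that is t ↦ y(t)z(t), also belongs to 𝓟𝓐𝓟(ℝ,ℝ,μ,ν). -/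
open MeasureTheory Filter Topology

noncomputable section

lemma ap_bounded (f : ℝ → ℝ) (hf : AP f) : ∃ C : ℝ, 0 ≤ C ∧ ∀ t, |f t| ≤ C := by
  obtain ⟨l, hl, hap⟩ := hf.2 1 one_pos
  obtain ⟨C, hC⟩ := (isCompact_Icc (a := (0:ℝ)) (b := l)).exists_bound_of_continuousOn
    hf.1.continuousOn
  refine ⟨C + 1, ?_, ?_⟩
  · have := hC 0 ⟨le_refl 0, hl.le⟩
    have : (0:ℝ) ≤ C := le_trans (norm_nonneg _) this
    linarith
  · intro t
    obtain ⟨τ, hτ, hprop⟩ := hap (-t)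
    have h1 : t + τ ∈ Set.Icc (0:ℝ) l := ⟨by linarith [hτ.1], by linarith [hτ.2]⟩
    have h2 := hC _ h1
    have h3 := hprop t
    rw [Real.norm_eq_abs] at h2 h3
    calc |f t| ≤ |f (t + τ)| + |f (t + τ) - f t| := by
          have := abs_sub_abs_le_abs_sub (f t) (f (t + τ))
          rw [abs_sub_comm (f t) (f (t+τ))] at this
          linarith
      _ ≤ C + 1 := by linarith

lemma ap_uc (f : ℝ → ℝ) (hf : AP f) : UniformContinuous f := by
  rw [Metric.uniformContinuous_iff]
  intro ε hε
  obtain ⟨l, hl, hap⟩ := hf.2 (ε/3) (by linarith)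
  have hK : IsCompact (Set.Icc (-1 : ℝ) (l+1)) := isCompact_Icc
  have huc := hK.uniformContinuousOn_of_continuous hf.1.continuousOn
  rw [Metric.uniformContinuousOn_iff] at huc
  obtain ⟨δ, hδ, hδprop⟩ := huc (ε/3) (by linarith)
  refine ⟨min δ 1, lt_min hδ one_pos, ?_⟩
  intro s t hst
  obtain ⟨τ, hτ, hprop⟩ := hap (-t)
  have hdist : |s - t| < min δ 1 := by rwa [Real.dist_eq] at hst
  have h1 : t + τ ∈ Set.Icc (-1 : ℝ) (l+1) := ⟨by linarith [hτ.1], by linarith [hτ.2]⟩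
  have h2 : s + τ ∈ Set.Icc (-1 : ℝ) (l+1) := by
    have := abs_lt.mp (lt_of_lt_of_le hdist (min_le_right _ _))
    constructor <;> [linarith [hτ.1]; linarith [hτ.2]]
  have h3 : dist (s + τ) (t + τ) < δ := by
    rw [Real.dist_eq]
    have : s + τ - (t + τ) = s - t := by ring
    rw [this]
    exact lt_of_lt_of_le hdist (min_le_left _ _)
  have h4 := hδprop _ h2 _ h1 h3
  have h5 := hprop s
  have h6 := hprop t
  rw [Real.dist_eq] at h4 ⊢
  rw [Real.norm_eq_abs] at h5 h6
  have A : |f s - f t| ≤ |f s - f (s+τ)| + |f (s+τ) - f t| := abs_sub_le _ _ _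
  have B : |f (s+τ) - f t| ≤ |f (s+τ) - f (t+τ)| + |f (t+τ) - f t| := abs_sub_le _ _ _
  have C1 : |f s - f t| = |f t - f s| := abs_sub_comm _ _
  have C2 : |f s - f (s+τ)| = |f (s+τ) - f s| := abs_sub_comm _ _
  linarith

lemma common_ap (f g : ℝ → ℝ) (hf : AP f) (hg : AP g) (ε : ℝ) (hε : 0 < ε) :
    ∃ L : ℝ, 0 < L ∧ ∀ A : ℝ, ∃ τ ∈ Set.Icc A (A + L),
      (∀ t, |f (t + τ) - f t| < ε) ∧ (∀ t, |g (t + τ) - g t| < ε) := by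
  -- uniform continuity of g
  have hguc := Metric.uniformContinuous_iff.mp (ap_uc g hg) (ε/4) (by linarith)
  obtain ⟨δ₀, hδ₀, hgδ⟩ := hguc
  set δ := δ₀ / 2 with hδdef
  have hδ : 0 < δ := by positivity
  -- lengths
  obtain ⟨lf, hlf, hapf⟩ := hf.2 (ε/4) (by linarith)
  obtain ⟨lg, hlg, hapg⟩ := hg.2 (ε/4) (by linarith)
  set l := max lf lg with hldef
  have hl : 0 < l := lt_max_of_lt_left hlf
  -- choice of pairs
  have hpair : ∀ a : ℝ, ∃ τ1 : ℝ, ∃ τ2 : ℝ,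
      τ1 ∈ Set.Icc a (a + l) ∧ τ2 ∈ Set.Icc a (a + l) ∧
      (∀ t, |f (t + τ1) - f t| < ε/4) ∧ (∀ t, |g (t + τ2) - g t| < ε/4) := by
    intro a
    obtain ⟨τ1, hτ1, hp1⟩ := hapf a
    obtain ⟨τ2, hτ2, hp2⟩ := hapg a
    refine ⟨τ1, τ2, ⟨hτ1.1, le_trans hτ1.2 (by simp [hldef])⟩,
      ⟨hτ2.1, le_trans hτ2.2 (by simp [hldef])⟩, fun t => ?_, fun t => ?_⟩
    · simpa [Real.norm_eq_abs] using hp1 t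
    · simpa [Real.norm_eq_abs] using hp2 t
  choose τf τg hτf hτg hfap hgap using hpair
  set d : ℝ → ℝ := fun a => τf a - τg a with hddef
  have hdmem : ∀ a, d a ∈ Set.Icc (-l) l := by
    intro a
    have h1 := hτf a; have h2 := hτg a
    exact ⟨by simp only [hddef]; linarith [h1.1, h2.2], by simp only [hddef]; linarith [h1.2, h2.1]⟩
  -- totally bounded range
  have htb : TotallyBounded (Set.range d) := by
    apply TotallyBounded.subset (Set.range_subset_iff.mpr hdmem)
    exact isCompact_Icc.totallyBounded
  rw [Metric.totallyBounded_iff] at htb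
  obtain ⟨T, hTfin, hTcov⟩ := htb δ hδ
  -- restrict to occupied centers
  set T' : Set ℝ := {y ∈ T | ∃ a, dist (d a) y < δ} with hT'def
  have hT'fin : T'.Finite := hTfin.subset (Set.sep_subset _ _)
  have hcov' : ∀ a : ℝ, ∃ y ∈ T', dist (d a) y < δ := by
    intro a
    have : d a ∈ ⋃ y ∈ T, Metric.ball y δ := hTcov ⟨a, rfl⟩
    simp only [Set.mem_iUnion, Metric.mem_ball] at this
    obtain ⟨y, hyT, hyd⟩ := this
    exact ⟨y, ⟨hyT, a, hyd⟩, hyd⟩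
  -- representatives
  have hrep : ∀ y : ℝ, ∃ a : ℝ, y ∈ T' → dist (d a) y < δ := by
    intro y
    by_cases h : y ∈ T'
    · obtain ⟨a, ha⟩ := h.2
      exact ⟨a, fun _ => ha⟩
    · exact ⟨0, fun hy => absurd hy h⟩
  choose c hc using hrep
  set S : Set ℝ := c '' T' with hSdef
  have hSfin : S.Finite := hT'fin.image c
  have hSne : S.Nonempty := by
    obtain ⟨y, hy, _⟩ := hcov' 0
    exact ⟨c y, Set.mem_image_of_mem c hy⟩
  obtain ⟨B1, hB1⟩ := hSfin.bddAbove
  obtain ⟨B2, hB2⟩ := hSfin.bddBelow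
  have hB21 : B2 ≤ B1 := by
    obtain ⟨x, hx⟩ := hSne
    exact le_trans (hB2 hx) (hB1 hx)
  refine ⟨B1 - B2 + 2 * l, by linarith, ?_⟩
  intro A
  set a := A + B1 + l with hadef
  obtain ⟨y, hyT', hyd⟩ := hcov' a
  have hyrep := hc y hyT'
  have hcyS : c y ∈ S := Set.mem_image_of_mem c hyT'
  have hcy1 : c y ≤ B1 := hB1 hcyS
  have hcy2 : B2 ≤ c y := hB2 hcyS
  set b := c y with hbdef
  refine ⟨τf a - τf b, ⟨?_, ?_⟩, ?_, ?_⟩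
  · have h1 := (hτf a).1; have h2 := (hτf b).2
    simp only [hadef] at h1 ⊢; linarith
  · have h1 := (hτf a).2; have h2 := (hτf b).1
    simp only [hadef] at h1 ⊢; linarith
  · intro t
    have h1 := hfap a (t - τf b)
    have h2 := hfap b (t - τf b)
    have e1 : t - τf b + τf a = t + (τf a - τf b) := by ring
    have e2 : t - τf b + τf b = t := by ring
    rw [e1] at h1; rw [e2] at h2
    calc |f (t + (τf a - τf b)) - f t|
        ≤ |f (t + (τf a - τf b)) - f (t - τf b)| + |f (t - τf b) - f t| := abs_sub_le _ _ _
      _ < ε := by rw [abs_sub_comm (f (t - τf b))] at *; linarith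
  · intro t
    -- compare with τ' = τg a - τg b
    have h1 := hgap a (t - τg b)
    have h2 := hgap b (t - τg b)
    have e1 : t - τg b + τg a = t + (τg a - τg b) := by ring
    have e2 : t - τg b + τg b = t := by ring
    rw [e1] at h1; rw [e2] at h2
    have hτ' : |g (t + (τg a - τg b)) - g t| < ε/2 := by
      calc |g (t + (τg a - τg b)) - g t|
          ≤ |g (t + (τg a - τg b)) - g (t - τg b)| + |g (t - τg b) - g t| := abs_sub_le _ _ _
        _ < ε/2 := by rw [abs_sub_comm (g (t - τg b))] at *; linarith
    have hclose : dist (t + (τf a - τf b)) (t + (τg a - τg b)) < δ₀ := by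
      rw [Real.dist_eq]
      have e : t + (τf a - τf b) - (t + (τg a - τg b)) = (d a - y) - (d b - y) := by
        simp only [hddef]; ring
      rw [e]
      rw [Real.dist_eq] at hyd hyrep
      calc |d a - y - (d b - y)| ≤ |d a - y| + |d b - y| := abs_sub _ _
        _ < δ₀ := by rw [hδdef] at hyd hyrep; linarith
    have huc := hgδ hclose
    rw [Real.dist_eq] at huc
    calc |g (t + (τf a - τf b)) - g t|
        ≤ |g (t + (τf a - τf b)) - g (t + (τg a - τg b))| + |g (t + (τg a - τg b)) - g t| :=
          abs_sub_le _ _ _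
      _ < ε := by linarith

lemma ap_mul (f g : ℝ → ℝ) (hf : AP f) (hg : AP g) : AP (fun t => f t * g t) := by
  refine ⟨hf.1.mul hg.1, ?_⟩
  intro ε hε
  obtain ⟨Cf, hCf0, hCf⟩ := ap_bounded f hf
  obtain ⟨Cg, hCg0, hCg⟩ := ap_bounded g hg
  set ε' := ε / (Cf + Cg + 1) with hε'def
  have hε' : 0 < ε' := by positivity
  obtain ⟨L, hL, hcom⟩ := common_ap f g hf hg ε' hε'
  refine ⟨L, hL, ?_⟩
  intro a
  obtain ⟨τ, hτ, hfp, hgp⟩ := hcom a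
  refine ⟨τ, hτ, ?_⟩
  intro t
  rw [Real.norm_eq_abs]
  have key : f (t + τ) * g (t + τ) - f t * g t
      = f (t + τ) * (g (t + τ) - g t) + g t * (f (t + τ) - f t) := by ring
  calc |f (t + τ) * g (t + τ) - f t * g t|
      ≤ |f (t + τ) * (g (t + τ) - g t)| + |g t * (f (t + τ) - f t)| := by
        rw [key]; exact abs_add_le _ _
    _ = |f (t + τ)| * |g (t + τ) - g t| + |g t| * |f (t + τ) - f t| := by
        rw [abs_mul, abs_mul]
    _ ≤ Cf * ε' + Cg * ε' := by
        have h1 := (hfp t).le; have h2 := (hgp t).le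
        have := hCf (t + τ); have := hCg t
        have n1 : (0:ℝ) ≤ |g (t + τ) - g t| := abs_nonneg _
        have n2 : (0:ℝ) ≤ |f (t + τ) - f t| := abs_nonneg _
        have n3 : (0:ℝ) ≤ |f (t + τ)| := abs_nonneg _
        have n4 : (0:ℝ) ≤ |g t| := abs_nonneg _
        nlinarith
    _ < (Cf + Cg + 1) * ε' := by nlinarith
    _ = ε := by rw [hε'def]; field_simp [(by linarith : (0:ℝ) < Cf + Cg + 1).ne']

lemma hfinIcc (μ : Measure ℝ) (hμ : InM μ) (z : ℝ) : μ (Set.Icc (-z) z) < ⊤ := by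
  rcases le_or_gt (-z) z with h | h
  · exact hμ.2 _ _ h
  · rw [Set.Icc_eq_empty (not_le.mpr h)]; simp

lemma integrableOn_bc (μ : Measure ℝ) (hμ : InM μ) (φ : ℝ → ℝ) (hφ : BC φ) (z : ℝ) :
    IntegrableOn (fun t => |φ t|) (Set.Icc (-z) z) μ := by
  obtain ⟨C, hC⟩ := hφ.2
  refine Integrable.mono' (g := fun _ => C) (integrableOn_const (hfinIcc μ hμ z).ne)
    ((hφ.1.abs).aestronglyMeasurable.restrict) ?_
  filter_upwards with t
  rw [Real.norm_eq_abs, abs_abs, ← Real.norm_eq_abs]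
  exact hC t

lemma erg_mul_bc (μ ν : Measure ℝ) (hμ : InM μ) (h φ : ℝ → ℝ) (hh : BC h)
    (hφ : Erg μ ν φ) : Erg μ ν (fun t => h t * φ t) := by
  obtain ⟨C, hC⟩ := hh.2
  have hC0 : 0 ≤ C := le_trans (norm_nonneg _) (hC 0)
  obtain ⟨Cφ, hCφ⟩ := hφ.1.2
  constructor
  · exact ⟨hh.1.mul hφ.1.1, C * Cφ, fun t => by
      rw [Real.norm_eq_abs, abs_mul]
      exact mul_le_mul (by rw [← Real.norm_eq_abs]; exact hC t)
        (by rw [← Real.norm_eq_abs]; exact hCφ t) (abs_nonneg _) hC0⟩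
  · apply squeeze_zero (g := fun z => C * (((ν (Set.Icc (-z) z)).toReal)⁻¹ *
      ∫ t in Set.Icc (-z) z, ‖φ t‖ ∂μ))
    · intro z
      apply mul_nonneg (by positivity)
      exact integral_nonneg (fun t => norm_nonneg _)
    · intro z
      rw [← mul_assoc, mul_comm C, mul_assoc]
      apply mul_le_mul_of_nonneg_left _ (by positivity)
      simp only [Real.norm_eq_abs]
      rw [← integral_const_mul]
      apply integral_mono (f := fun t => |h t * φ t|)
      · exact integrableOn_bc μ hμ _ ⟨hh.1.mul hφ.1.1, C * Cφ, fun t => by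
          rw [Real.norm_eq_abs, Pi.mul_apply, abs_mul]
          exact mul_le_mul (by rw [← Real.norm_eq_abs]; exact hC t)
            (by rw [← Real.norm_eq_abs]; exact hCφ t) (abs_nonneg _) hC0⟩ z
      · exact (integrableOn_bc μ hμ φ hφ.1 z).const_mul C
      · intro t
        simp only
        rw [abs_mul]
        exact mul_le_mul_of_nonneg_right (by rw [← Real.norm_eq_abs]; exact hC t) (abs_nonneg _)
    · simpa using hφ.2.const_mul C

lemma erg_add (μ ν : Measure ℝ) (hμ : InM μ) (φ ψ : ℝ → ℝ) (hφ : Erg μ ν φ)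
    (hψ : Erg μ ν ψ) : Erg μ ν (fun t => φ t + ψ t) := by
  obtain ⟨Cφ, hCφ⟩ := hφ.1.2
  obtain ⟨Cψ, hCψ⟩ := hψ.1.2
  have hbc : BC (fun t => φ t + ψ t) := ⟨hφ.1.1.add hψ.1.1, Cφ + Cψ, fun t =>
    le_trans (norm_add_le _ _) (add_le_add (hCφ t) (hCψ t))⟩
  refine ⟨hbc, ?_⟩
  apply squeeze_zero (g := fun z => (((ν (Set.Icc (-z) z)).toReal)⁻¹ *
      ∫ t in Set.Icc (-z) z, ‖φ t‖ ∂μ) + (((ν (Set.Icc (-z) z)).toReal)⁻¹ *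
      ∫ t in Set.Icc (-z) z, ‖ψ t‖ ∂μ))
  · intro z
    apply mul_nonneg (by positivity)
    exact integral_nonneg (fun t => norm_nonneg _)
  · intro z
    rw [← mul_add]
    apply mul_le_mul_of_nonneg_left _ (by positivity)
    simp only [Real.norm_eq_abs]
    rw [← integral_add (integrableOn_bc μ hμ φ hφ.1 z) (integrableOn_bc μ hμ ψ hψ.1 z)]
    apply integral_mono (f := fun t => |φ t + ψ t|)
    · exact integrableOn_bc μ hμ _ hbc z
    · exact (integrableOn_bc μ hμ φ hφ.1 z).add (integrableOn_bc μ hμ ψ hψ.1 z)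
    · exact fun t => abs_add_le _ _
  · simpa using hφ.2.add hψ.2


lemma bc_mul (f g : ℝ → ℝ) (hf : BC f) (hg : BC g) : BC (fun t => f t * g t) := by
  obtain ⟨Cf, hCf⟩ := hf.2
  obtain ⟨Cg, hCg⟩ := hg.2
  have hCf0 : 0 ≤ Cf := le_trans (norm_nonneg _) (hCf 0)
  refine ⟨hf.1.mul hg.1, Cf * Cg, fun t => ?_⟩
  rw [Real.norm_eq_abs, abs_mul]
  exact mul_le_mul (by rw [← Real.norm_eq_abs]; exact hCf t)
    (by rw [← Real.norm_eq_abs]; exact hCg t) (abs_nonneg _) hCf0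

lemma bc_of_ap (f : ℝ → ℝ) (hf : AP f) : BC f := by
  obtain ⟨C, _, hC⟩ := ap_bounded f hf
  exact ⟨hf.1, C, fun t => by rw [Real.norm_eq_abs]; exact hC t⟩

theorem pap_product (μ ν : Measure ℝ) (hμ : InM μ) (hν : InM ν)
    (y z : ℝ → ℝ) (hy : PAP μ ν y) (hz : PAP μ ν z) :
    PAP μ ν (fun t => y t * z t) := by
  obtain ⟨bcy, g1, φ1, hg1, hφ1, hy1⟩ := hy
  obtain ⟨bcz, g2, φ2, hg2, hφ2, hz1⟩ := hz
  refine ⟨bc_mul y z bcy bcz, fun t => g1 t * g2 t,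
    fun t => g1 t * φ2 t + (φ1 t * g2 t + φ1 t * φ2 t), ap_mul g1 g2 hg1 hg2, ?_, ?_⟩
  · have e1 : Erg μ ν (fun t => g1 t * φ2 t) :=
      erg_mul_bc μ ν hμ g1 φ2 (bc_of_ap g1 hg1) hφ2
    have e2 : Erg μ ν (fun t => φ1 t * g2 t) := by
      have := erg_mul_bc μ ν hμ g2 φ1 (bc_of_ap g2 hg2) hφ1
      have heq : (fun t => φ1 t * g2 t) = (fun t => g2 t * φ1 t) :=
        funext fun t => mul_comm _ _
      rw [heq]; exact this
    have e3 : Erg μ ν (fun t => φ1 t * φ2 t) :=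
      erg_mul_bc μ ν hμ φ1 φ2 hφ1.1 hφ2
    exact erg_add μ ν hμ _ _ e1 (erg_add μ ν hμ _ _ e2 e3)
  · intro t
    simp only
    rw [hy1 t, hz1 t]
    ring
end
end

section
/- Let c : ℝ → ℝ be almost periodic with c* := inf_{t∈ℝ} c(t) > 0, and let F : ℝ → ℝ be almost periodic. Then the function t ↦ ∫_{−∞}^{t} e^{−∫_{s}^{t} c(u) du} F(s) ds is well defined (the integral converges absolutely, being dominated by ‖F‖_∞ ∫_{−∞}^{t} e^{−c*(t−s)} ds), bounded, and almost periodic on ℝ. -/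
set_option maxHeartbeats 1000000


open MeasureTheory Filter Topology

noncomputable section

section Helpers
open Set Real

lemma exp_shift_integrableOn (b t : ℝ) (hb : 0 < b) :
    IntegrableOn (fun s => Real.exp (b * (s - t))) (Set.Iic t) := by
  have hemb : MeasurableEmbedding fun x : ℝ => -x :=
    (Homeomorph.neg ℝ).isClosedEmbedding.measurableEmbedding
  have h1 : IntegrableOn (fun x => Real.exp (-b * x) * Real.exp (-b * t)) (Ioi (-t)) :=
    (exp_neg_integrableOn_Ioi (-t) hb).mul_const _
  have := (MeasurePreserving.integrableOn_comp_preimage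
      (Measure.measurePreserving_neg (volume : Measure ℝ)) hemb).2 h1
  have hs : (fun x : ℝ => -x) ⁻¹' (Ioi (-t)) = Iio t := by
    ext x; simp [neg_lt]
  rw [hs] at this
  have : IntegrableOn (fun s => Real.exp (b * (s - t))) (Iio t) := by
    refine this.congr_fun (fun x _ => ?_) measurableSet_Iio
    simp [← Real.exp_add]; ring_nf
  exact this.congr_set_ae Iio_ae_eq_Iic.symm

lemma addRight_emb (τ : ℝ) : MeasurableEmbedding fun x : ℝ => x + τ :=
  (Homeomorph.addRight τ).isClosedEmbedding.measurableEmbedding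

lemma setIntegral_Iic_shift (f : ℝ → ℝ) (t τ : ℝ) :
    ∫ s in Iic (t + τ), f s = ∫ s in Iic t, f (s + τ) := by
  have h := (addRight_emb τ).setIntegral_map (μ := volume) f (Iic (t + τ))
  rw [(measurePreserving_add_right (volume : Measure ℝ) τ).map_eq] at h
  rw [h]
  congr 1
  ext x; simp

lemma integrableOn_Iic_shift {f : ℝ → ℝ} {t τ : ℝ} (h : IntegrableOn f (Iic (t + τ))) :
    IntegrableOn (fun s => f (s + τ)) (Iic t) := by
  have h2 := (MeasurePreserving.integrableOn_comp_preimage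
      (measurePreserving_add_right (volume : Measure ℝ) τ) (addRight_emb τ)).2 h
  have hs : (fun x : ℝ => x + τ) ⁻¹' (Iic (t + τ)) = Iic t := by ext x; simp
  rwa [hs] at h2

lemma AP.bounded {f : ℝ → ℝ} (hf : AP f) : ∃ M : ℝ, 0 ≤ M ∧ ∀ t, |f t| ≤ M := by
  obtain ⟨hcont, hap⟩ := hf
  obtain ⟨l, hl, hτ⟩ := hap 1 one_pos
  obtain ⟨M₀, hM₀⟩ := (isCompact_Icc (a := (0:ℝ)) (b := l)).exists_bound_of_continuousOn
    hcont.continuousOn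
  refine ⟨M₀ + 1, ?_, fun t => ?_⟩
  · have := hM₀ 0 (by constructor <;> simp [hl.le])
    have h0 : (0:ℝ) ≤ |f 0| := abs_nonneg _
    simp only [Real.norm_eq_abs] at this; linarith
  · obtain ⟨τ, hτmem, hτs⟩ := hτ (-t)
    have h1 := hτs t
    have h2 : t + τ ∈ Icc (0:ℝ) l := by
      obtain ⟨ha, hb⟩ := hτmem
      constructor <;> [linarith; linarith]
    have h3 := hM₀ _ h2
    simp only [Real.norm_eq_abs] at h1 h3
    have : |f t| ≤ |f (t + τ)| + |f (t + τ) - f t| := by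
      have := abs_sub_abs_le_abs_sub (f t) (f (t + τ))
      rw [abs_sub_comm (f t) (f (t+τ))] at this
      linarith
    linarith

lemma AP.unif {f : ℝ → ℝ} (hf : AP f) {ε : ℝ} (hε : 0 < ε) :
    ∃ δ : ℝ, 0 < δ ∧ ∀ s : ℝ, |s| ≤ δ → ∀ t : ℝ, |f (t + s) - f t| < ε := by
  obtain ⟨hcont, hap⟩ := hf
  obtain ⟨l, hl, hτ⟩ := hap (ε/3) (by linarith)
  -- uniform continuity on [-1, l+1]
  have hUC : UniformContinuousOn f (Icc (-1) (l+1)) := by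
    exact (isCompact_Icc).uniformContinuousOn_of_continuous hcont.continuousOn
  rw [Metric.uniformContinuousOn_iff] at hUC
  obtain ⟨δ₀, hδ₀, hδ⟩ := hUC (ε/3) (by linarith)
  refine ⟨min (δ₀/2) 1, by positivity, fun s hs t => ?_⟩
  obtain ⟨τ, ⟨hτ1, hτ2⟩, hτs⟩ := hτ (-t)
  have hs1 : |s| ≤ 1 := le_trans hs (min_le_right _ _)
  have hs0 : |s| < δ₀ := lt_of_le_of_lt (le_trans hs (min_le_left _ _)) (by linarith)
  have habs := abs_le.1 hs1
  have hmem1 : t + τ ∈ Icc (-1:ℝ) (l+1) := by constructor <;> [linarith; linarith]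
  have hmem2 : t + s + τ ∈ Icc (-1:ℝ) (l+1) := by constructor <;> [linarith; linarith]
  have h1 := hτs t
  have h2 := hτs (t + s)
  have h3 := hδ _ hmem2 _ hmem1 (by rw [Real.dist_eq]; simpa using hs0)
  rw [Real.dist_eq] at h3
  have key : f (t+s) - f t = -(f (t+s+τ) - f (t+s)) + (f (t+s+τ) - f (t+τ)) + (f (t+τ) - f t) := by
    ring
  rw [Real.norm_eq_abs] at h1 h2
  have ha1 := abs_add_le (-(f (t+s+τ) - f (t+s)) + (f (t+s+τ) - f (t+τ))) (f (t+τ) - f t)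
  have ha2 := abs_add_le (-(f (t+s+τ) - f (t+s))) (f (t+s+τ) - f (t+τ))
  rw [abs_neg] at ha2
  rw [key]
  linarith

lemma AP.common {f g : ℝ → ℝ} (hf : AP f) (hg : AP g) {ε : ℝ} (hε : 0 < ε) :
    ∃ L : ℝ, 0 < L ∧ ∀ a : ℝ, ∃ τ ∈ Set.Icc a (a + L),
      (∀ t, |f (t + τ) - f t| < ε) ∧ (∀ t, |g (t + τ) - g t| < ε) := by
  classical
  obtain ⟨δ, hδ, hδg⟩ := hg.unif (show (0:ℝ) < ε/4 by linarith)
  obtain ⟨l₁, hl₁, hT₁⟩ := hf.2 (ε/2) (by linarith)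
  obtain ⟨l₂, hl₂, hT₂⟩ := hg.2 (ε/4) (by linarith)
  set l : ℝ := max l₁ l₂ with hldef
  have hl : 0 < l := lt_of_lt_of_le hl₁ (le_max_left _ _)
  have hT₁' : ∀ a : ℝ, ∃ τ, τ ∈ Set.Icc a (a + l) ∧ ∀ t : ℝ, |f (t + τ) - f t| < ε/2 := by
    intro a; obtain ⟨τ, hmem, hp⟩ := hT₁ a
    exact ⟨τ, ⟨hmem.1, hmem.2.trans (by simp [hldef, le_max_left])⟩, fun t => by
      simpa using hp t⟩
  have hT₂' : ∀ a : ℝ, ∃ τ, τ ∈ Set.Icc a (a + l) ∧ ∀ t : ℝ, |g (t + τ) - g t| < ε/4 := by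
    intro a; obtain ⟨τ, hmem, hp⟩ := hT₂ a
    exact ⟨τ, ⟨hmem.1, hmem.2.trans (by simp [hldef, le_max_right])⟩, fun t => by
      simpa using hp t⟩
  choose τ₁ hτ₁mem hτ₁p using hT₁'
  choose τ₂ hτ₂mem hτ₂p using hT₂'
  set d : ℝ → ℝ := fun a => τ₁ a - τ₂ a with hd
  have hdbound : ∀ a, -l ≤ d a ∧ d a ≤ l := by
    intro a
    have h1 := hτ₁mem a; have h2 := hτ₂mem a
    constructor
    · have := h1.1; have := h2.2; simp only [hd]; linarith [h1.1, h2.2]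
    · simp only [hd]; linarith [h1.2, h2.1]
  set k : ℝ → ℤ := fun a => ⌊d a / δ⌋ with hk
  set m : ℤ := ⌊(-l) / δ⌋ with hm
  set M : ℤ := ⌊l / δ⌋ with hM
  have hkmem : ∀ a, k a ∈ Finset.Icc m M := by
    intro a
    rw [Finset.mem_Icc]
    obtain ⟨h1, h2⟩ := hdbound a
    exact ⟨Int.floor_le_floor (by gcongr), Int.floor_le_floor (by gcongr)⟩
  have hmM : m ≤ M := Int.floor_le_floor ((div_le_div_iff_of_pos_right hδ).mpr (by linarith))
  set rep : ℤ → ℝ := fun j => if h : ∃ a, k a = j then h.choose else 0 with hrep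
  have hrepk : ∀ (a : ℝ), k (rep (k a)) = k a := by
    intro a
    have h : ∃ b, k b = k a := ⟨a, rfl⟩
    simp only [hrep, dif_pos h]
    exact h.choose_spec
  have hne : (Finset.Icc m M).Nonempty := ⟨m, Finset.mem_Icc.2 ⟨le_refl _, hmM⟩⟩
  set A : ℝ := (Finset.Icc m M).sup' hne (fun j => |rep j|) with hA
  have hAnn : 0 ≤ A := le_trans (abs_nonneg (rep m)) (Finset.le_sup' (fun j => |rep j|) (Finset.mem_Icc.2 ⟨le_refl _, hmM⟩))
  refine ⟨2*A + 2*l, by linarith, fun y => ?_⟩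
  set a : ℝ := y + A + l with ha
  set a' : ℝ := rep (k a) with ha'
  have hka' : k a' = k a := hrepk a
  have hA' : |a'| ≤ A := Finset.le_sup' (fun j => |rep j|) (hka' ▸ hkmem a')
  have habs := abs_le.1 hA'
  set τ : ℝ := τ₁ a - τ₁ a' with hτ
  have hmem : τ ∈ Set.Icc y (y + (2*A + 2*l)) := by
    obtain ⟨u1, u2⟩ := hτ₁mem a
    obtain ⟨v1, v2⟩ := hτ₁mem a'
    constructor
    · simp only [hτ, ha]; linarith
    · simp only [hτ, ha]; linarith
  refine ⟨τ, hmem, fun t => ?_, fun t => ?_⟩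
  · have h1 := hτ₁p a (t - τ₁ a')
    have h2 := hτ₁p a' (t - τ₁ a')
    have e1 : t - τ₁ a' + τ₁ a = t + τ := by simp only [hτ]; ring
    have e2 : t - τ₁ a' + τ₁ a' = t := by ring
    rw [e1] at h1; rw [e2] at h2
    have key : |f (t + τ) - f t| ≤ |f (t + τ) - f (t - τ₁ a')| + |f t - f (t - τ₁ a')| := by
      have := abs_sub (f (t + τ) - f (t - τ₁ a')) (f t - f (t - τ₁ a'))
      have e3 : (f (t + τ) - f (t - τ₁ a')) - (f t - f (t - τ₁ a')) = f (t + τ) - f t := by ring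
      rwa [e3] at this
    linarith
  · set s : ℝ := d a - d a' with hs
    have hsδ : |s| ≤ δ := by
      have h1 : ((k a : ℤ) : ℝ) ≤ d a / δ := Int.floor_le _
      have h2 : d a / δ < (k a : ℤ) + 1 := Int.lt_floor_add_one _
      have h3 : ((k a : ℤ) : ℝ) ≤ d a' / δ := by rw [← hka']; exact Int.floor_le _
      have h4 : d a' / δ < ((k a : ℤ) : ℝ) + 1 := by rw [← hka']; exact Int.lt_floor_add_one _
      have H1 : ((k a : ℤ) : ℝ) * δ ≤ d a := (le_div_iff₀ hδ).mp h1
      have H2 : d a < (((k a : ℤ) : ℝ) + 1) * δ := (div_lt_iff₀ hδ).mp h2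
      have H3 : ((k a : ℤ) : ℝ) * δ ≤ d a' := (le_div_iff₀ hδ).mp h3
      have H4 : d a' < (((k a : ℤ) : ℝ) + 1) * δ := (div_lt_iff₀ hδ).mp h4
      rw [abs_le]
      constructor <;> nlinarith
    have hτeq : τ = (τ₂ a - τ₂ a') + s := by simp only [hτ, hs, hd]; ring
    have h1 := hτ₂p a (t + s - τ₂ a')
    have h2 := hτ₂p a' (t + s - τ₂ a')
    have h3 := hδg s hsδ t
    have e1 : t + s - τ₂ a' + τ₂ a = t + τ := by rw [hτeq]; ring
    have e2 : t + s - τ₂ a' + τ₂ a' = t + s := by ring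
    rw [e1] at h1; rw [e2] at h2
    have key : |g (t + τ) - g t| ≤ |g (t + τ) - g (t + s - τ₂ a')| +
        |g (t + s) - g (t + s - τ₂ a')| + |g (t + s) - g t| := by
      have k1 := abs_add_le ((g (t + τ) - g (t + s - τ₂ a')) - (g (t + s) - g (t + s - τ₂ a')))
        (g (t + s) - g t)
      have k2 := abs_sub (g (t + τ) - g (t + s - τ₂ a')) (g (t + s) - g (t + s - τ₂ a'))
      have e3 : (g (t + τ) - g (t + s - τ₂ a')) - (g (t + s) - g (t + s - τ₂ a')) +
          (g (t + s) - g t) = g (t + τ) - g t := by ring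
      rw [e3] at k1
      linarith
    linarith

lemma exp_diff_bound {a b m : ℝ} (hma : m ≤ a) (hmb : m ≤ b) :
    |Real.exp (-a) - Real.exp (-b)| ≤ Real.exp (-m) * |a - b| := by
  wlog h : b ≤ a
  · rw [abs_sub_comm, abs_sub_comm a b]
    exact this hmb hma (le_of_not_ge h)
  have h1 : Real.exp (-a) ≤ Real.exp (-b) := Real.exp_le_exp.2 (by linarith)
  rw [abs_of_nonpos (by linarith), abs_of_nonneg (by linarith)]
  have h2 : Real.exp (-a) = Real.exp (-b) * Real.exp (-(a - b)) := by
    rw [← Real.exp_add]; ring_nf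
  have h3 : 1 - (a - b) ≤ Real.exp (-(a - b)) := by
    have := Real.add_one_le_exp (-(a - b)); linarith
  have h4 : Real.exp (-b) ≤ Real.exp (-m) := Real.exp_le_exp.2 (by linarith)
  have h5 := mul_le_mul_of_nonneg_left h3 (Real.exp_nonneg (-b))
  have h6 := mul_le_mul_of_nonneg_right h4 (show (0:ℝ) ≤ a - b by linarith)
  nlinarith [Real.exp_pos (-b)]

end Helpers

open Set Real in
theorem convolution_preserves_ap (c F : ℝ → ℝ) (hc : AP c)
    (hcpos : 0 < ⨅ t, c t) (hF : AP F) :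
    (∀ t : ℝ, IntegrableOn
      (fun s => Real.exp (-(∫ u in Set.Ioc s t, c u)) * F s) (Set.Iic t)) ∧
    (∃ C : ℝ, ∀ t : ℝ,
      |∫ s in Set.Iic t, Real.exp (-(∫ u in Set.Ioc s t, c u)) * F s| ≤ C) ∧
    AP (fun t => ∫ s in Set.Iic t, Real.exp (-(∫ u in Set.Ioc s t, c u)) * F s) := by
  set cs : ℝ := ⨅ t, c t with hcs
  have hbdd : BddBelow (Set.range c) := by
    by_contra h
    rw [hcs, Real.iInf_of_not_bddBelow h] at hcpos
    exact lt_irrefl 0 hcpos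
  have hcge : ∀ t, cs ≤ c t := fun t => ciInf_le hbdd t
  obtain ⟨M, hM0, hMb⟩ := hF.bounded
  have hii : ∀ a b : ℝ, IntervalIntegrable c volume a b := fun a b =>
    hc.1.intervalIntegrable a b
  set P : ℝ → ℝ := fun r => ∫ u in (0:ℝ)..r, c u with hPdef
  have hPcont : Continuous P := intervalIntegral.continuous_primitive hii 0
  have hAeq : ∀ s t : ℝ, s ≤ t → (∫ u in Set.Ioc s t, c u) = P t - P s := by
    intro s t h
    rw [← intervalIntegral.integral_of_le h]
    have h1 := intervalIntegral.integral_add_adjacent_intervals (hii s 0) (hii 0 t)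
    rw [← h1, intervalIntegral.integral_symm 0 s]
    simp only [hPdef]; ring
  have hAlow : ∀ s t : ℝ, s ≤ t → cs * (t - s) ≤ ∫ u in Set.Ioc s t, c u := by
    intro s t h
    have hint : IntegrableOn c (Set.Ioc s t) :=
      (intervalIntegrable_iff_integrableOn_Ioc_of_le h).1 (hii s t)
    have h1 : ∫ _u in Set.Ioc s t, cs ≤ ∫ u in Set.Ioc s t, c u :=
      setIntegral_mono_on (integrableOn_const (by
        rw [Real.volume_Ioc]; exact ENNReal.ofReal_ne_top)) hint measurableSet_Ioc
        (fun u _ => hcge u)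
    rw [setIntegral_const, Real.volume_real_Ioc_of_le h, smul_eq_mul,
      mul_comm] at h1
    exact h1
  -- Part 1: integrability
  have hGint : ∀ t : ℝ, IntegrableOn (fun s => Real.exp (P s - P t) * F s) (Set.Iic t) := by
    intro t
    have hGcont : Continuous (fun s => Real.exp (P s - P t) * F s) :=
      ((Real.continuous_exp.comp (hPcont.sub continuous_const))).mul hF.1
    refine Integrable.mono' ((exp_shift_integrableOn cs t hcpos).mul_const M)
      hGcont.aestronglyMeasurable ?_
    rw [ae_restrict_iff' measurableSet_Iic]
    refine ae_of_all _ (fun s hs => ?_)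
    have hsle : s ≤ t := hs
    have h1 : P s - P t ≤ cs * (s - t) := by
      have := hAlow s t hsle
      rw [hAeq s t hsle] at this
      linarith
    have h2 : Real.exp (P s - P t) ≤ Real.exp (cs * (s - t)) := Real.exp_le_exp.2 h1
    rw [Real.norm_eq_abs, abs_mul, Real.abs_exp]
    exact mul_le_mul h2 (hMb s) (abs_nonneg _) (Real.exp_nonneg _)
  have hIntOn : ∀ t : ℝ, IntegrableOn
      (fun s => Real.exp (-(∫ u in Set.Ioc s t, c u)) * F s) (Set.Iic t) := by
    intro t
    refine (hGint t).congr_fun (fun s hs => ?_) measurableSet_Iic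
    rw [hAeq s t hs]
    ring_nf
  -- translation identity for exp integral
  have hKt : ∀ b : ℝ, 0 < b → ∀ t : ℝ, (∫ s in Set.Iic t, Real.exp (b * (s - t)))
      = ∫ s in Set.Iic (0:ℝ), Real.exp (b * s) := by
    intro b hb t
    have := setIntegral_Iic_shift (fun s => Real.exp (b * (s - t))) 0 t
    rw [zero_add] at this
    rw [this]
    congr 1; ext s; ring_nf
  -- Part 2 : bound
  have habs_bound : ∀ t : ℝ, |∫ s in Set.Iic t, Real.exp (-(∫ u in Set.Ioc s t, c u)) * F s|
      ≤ (∫ s in Set.Iic (0:ℝ), Real.exp (cs * s)) * M := by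
    intro t
    have h1 : |∫ s in Set.Iic t, Real.exp (-(∫ u in Set.Ioc s t, c u)) * F s|
        ≤ ∫ s in Set.Iic t, |Real.exp (-(∫ u in Set.Ioc s t, c u)) * F s| := by
      simpa only [Real.norm_eq_abs] using
        norm_integral_le_integral_norm (μ := volume.restrict (Set.Iic t))
          (fun s => Real.exp (-(∫ u in Set.Ioc s t, c u)) * F s)
    have h2 : ∫ s in Set.Iic t, |Real.exp (-(∫ u in Set.Ioc s t, c u)) * F s|
        ≤ ∫ s in Set.Iic t, Real.exp (cs * (s - t)) * M := by
      refine setIntegral_mono_on ((hIntOn t).abs) ((exp_shift_integrableOn cs t hcpos).mul_const M)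
        measurableSet_Iic (fun s hs => ?_)
      have hsle : s ≤ t := hs
      have h1' : -(∫ u in Set.Ioc s t, c u) ≤ cs * (s - t) := by
        have := hAlow s t hsle; linarith
      rw [abs_mul, Real.abs_exp]
      exact mul_le_mul (Real.exp_le_exp.2 h1') (hMb s) (abs_nonneg _) (Real.exp_nonneg _)
    have h3 : ∫ s in Set.Iic t, Real.exp (cs * (s - t)) * M
        = (∫ s in Set.Iic (0:ℝ), Real.exp (cs * s)) * M := by
      rw [integral_mul_const, hKt cs hcpos t]
    linarith
  -- continuity
  set q : ℝ → ℝ := fun s => Real.exp (P s) * F s with hq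
  have hqcont : Continuous q := (Real.continuous_exp.comp hPcont).mul hF.1
  have hqint : ∀ t : ℝ, IntegrableOn q (Set.Iic t) := by
    intro t
    refine IntegrableOn.congr_fun (s := Set.Iic t) ((hGint t).mul_const (Real.exp (P t))) (fun s _ => ?_) measurableSet_Iic
    simp only [hq]
    calc Real.exp (P s - P t) * F s * Real.exp (P t)
        = Real.exp (P s - P t) * Real.exp (P t) * F s := by ring
      _ = Real.exp (P s) * F s := by rw [← Real.exp_add]; ring_nf
  set x : ℝ → ℝ := fun t => ∫ s in Set.Iic t, Real.exp (-(∫ u in Set.Ioc s t, c u)) * F s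
    with hx
  have hxrep : ∀ t : ℝ, x t = Real.exp (-(P t)) * ∫ s in Set.Iic t, q s := by
    intro t
    rw [hx, ← integral_const_mul]
    refine setIntegral_congr_fun measurableSet_Iic (fun s hs => ?_)
    have hsle : s ≤ t := hs
    rw [hAeq s t hsle]
    simp only [hq]
    calc Real.exp (-(P t - P s)) * F s = Real.exp (-(P t)) * Real.exp (P s) * F s := by
          rw [← Real.exp_add]; ring_nf
      _ = Real.exp (-(P t)) * (Real.exp (P s) * F s) := by ring
  have hsplit : ∀ t : ℝ, (∫ s in Set.Iic t, q s)
      = (∫ s in Set.Iic (0:ℝ), q s) + ∫ s in (0:ℝ)..t, q s := by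
    intro t
    rcases le_total (0:ℝ) t with h | h
    · rw [intervalIntegral.integral_of_le h]
      rw [← setIntegral_union ((Set.Iic_disjoint_Ioi (le_refl (0:ℝ))).mono_right
          Set.Ioc_subset_Ioi_self) measurableSet_Ioc ((hqint 0)) ((hqint t).mono_set
          Set.Ioc_subset_Iic_self)]
      rw [Set.Iic_union_Ioc_eq_Iic h]
    · rw [intervalIntegral.integral_symm, intervalIntegral.integral_of_le h]
      have := setIntegral_union ((Set.Iic_disjoint_Ioi (le_refl t)).mono_right
          Set.Ioc_subset_Ioi_self) measurableSet_Ioc ((hqint t)) ((hqint 0).mono_set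
          Set.Ioc_subset_Iic_self)
      rw [Set.Iic_union_Ioc_eq_Iic h] at this
      rw [this]; ring
  have hxcont : Continuous x := by
    have h1 : Continuous fun t : ℝ => ∫ s in Set.Iic t, q s := by
      have : (fun t : ℝ => ∫ s in Set.Iic t, q s)
          = fun t => (∫ s in Set.Iic (0:ℝ), q s) + ∫ s in (0:ℝ)..t, q s := funext hsplit
      rw [this]
      exact continuous_const.add (intervalIntegral.continuous_primitive
        (fun a b => hqcont.intervalIntegrable a b) 0)
    have : x = fun t => Real.exp (-(P t)) * ∫ s in Set.Iic t, q s := funext hxrep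
    rw [this]
    exact (Real.continuous_exp.comp hPcont.neg).mul h1
  -- AP estimate
  have hap : ∀ ε : ℝ, 0 < ε → ∃ L : ℝ, 0 < L ∧ ∀ a : ℝ,
      ∃ τ ∈ Set.Icc a (a + L), ∀ t : ℝ, |x (t + τ) - x t| < ε := by
    intro ε hε
    set K4 : ℝ := ∫ s in Set.Iic (0:ℝ), Real.exp (cs/4 * s) with hK4
    have hK4nn : 0 ≤ K4 := setIntegral_nonneg measurableSet_Iic (fun s _ => Real.exp_nonneg _)
    have hcs4 : 0 < cs/4 := by positivity
    set CC : ℝ := 1 + 4 * M / cs with hCC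
    have hCCpos : 0 < CC := by positivity
    set D : ℝ := CC * K4 with hD
    have hDnn : 0 ≤ D := mul_nonneg hCCpos.le hK4nn
    set ε₁ : ℝ := ε / (D + 1) with hε₁
    have hε₁pos : 0 < ε₁ := by positivity
    obtain ⟨L, hL, hLp⟩ := AP.common hc hF hε₁pos
    refine ⟨L, hL, fun a => ?_⟩
    obtain ⟨τ, hτmem, hτc, hτF⟩ := hLp a
    refine ⟨τ, hτmem, fun t => ?_⟩
    set g1 : ℝ → ℝ := fun s => Real.exp (-(∫ u in Set.Ioc (s+τ) (t+τ), c u)) * F (s+τ)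
      with hg1def
    have hg1int : IntegrableOn g1 (Set.Iic t) := by
      have h := integrableOn_Iic_shift (f := fun s => Real.exp (-(∫ u in Set.Ioc s (t+τ), c u)) * F s) (hIntOn (t+τ))
      exact h
    have hshift : x (t + τ) = ∫ s in Set.Iic t, g1 s := by
      have h := setIntegral_Iic_shift (fun s => Real.exp (-(∫ u in Set.Ioc s (t+τ), c u)) * F s) t τ
      rw [hx]
      exact h
    have hdiff : x (t+τ) - x t
        = ∫ s in Set.Iic t, (g1 s - Real.exp (-(∫ u in Set.Ioc s t, c u)) * F s) := by
      rw [hshift, hx, ← integral_sub hg1int (hIntOn t)]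
    have hpt : ∀ s ∈ Set.Iic t, |g1 s - Real.exp (-(∫ u in Set.Ioc s t, c u)) * F s|
        ≤ ε₁ * CC * Real.exp (cs/4 * (s - t)) := by
      intro s hs
      have hsle : s ≤ t := hs
      set u : ℝ := t - s with hu
      have hu0 : 0 ≤ u := by simp only [hu]; linarith
      set A0 : ℝ := ∫ v in Set.Ioc s t, c v with hA0
      set A1 : ℝ := ∫ v in Set.Ioc (s+τ) (t+τ), c v with hA1
      have hA0ge : cs * u ≤ A0 := hAlow s t hsle
      have hA1ge : cs * u ≤ A1 := by
        have h' := hAlow (s+τ) (t+τ) (by linarith)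
        have e : t + τ - (s + τ) = u := by simp only [hu]; ring
        rw [e, ← hA1] at h'
        exact h'
      have hA01 : |A1 - A0| ≤ ε₁ * u := by
        have e1 : A1 = ∫ v in s..t, c (v + τ) := by
          rw [intervalIntegral.integral_comp_add_right (fun v => c v) τ]
          rw [hA1, ← intervalIntegral.integral_of_le (show s + τ ≤ t + τ by linarith)]
        have e0 : A0 = ∫ v in s..t, c v := (intervalIntegral.integral_of_le hsle).symm
        have hsub : A1 - A0 = ∫ v in s..t, (c (v + τ) - c v) := by
          have hcc : Continuous fun v : ℝ => c (v + τ) := hc.1.comp (continuous_add_right τ)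
          rw [e1, e0, intervalIntegral.integral_sub (hcc.intervalIntegrable s t) (hii s t)]
        rw [hsub]
        have hb := intervalIntegral.norm_integral_le_of_norm_le_const
          (C := ε₁) (f := fun v => c (v + τ) - c v) (a := s) (b := t)
          (fun v _ => (hτc v).le)
        rw [Real.norm_eq_abs] at hb
        calc |∫ v in s..t, (c (v+τ) - c v)| ≤ ε₁ * |t - s| := hb
          _ = ε₁ * u := by rw [hu, abs_of_nonneg (by linarith)]
      have E1 : Real.exp (-A1) ≤ Real.exp (-(cs*u)) := Real.exp_le_exp.2 (by linarith)
      have E0 : Real.exp (-(cs*u)) ≤ Real.exp (-(cs/4*u)) := Real.exp_le_exp.2 (by nlinarith)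
      have E2 : |Real.exp (-A1) - Real.exp (-A0)| ≤ Real.exp (-(cs*u)) * |A1 - A0| :=
        exp_diff_bound hA1ge hA0ge
      have E3 : u ≤ 4/cs * Real.exp (cs/4*u) := by
        have h1 : cs/4*u ≤ Real.exp (cs/4*u) := by linarith [Real.add_one_le_exp (cs/4*u)]
        have h2 := mul_le_mul_of_nonneg_left h1 (show (0:ℝ) ≤ 4/cs by positivity)
        have e : 4/cs*(cs/4*u) = u := by field_simp
        linarith [e ▸ h2]
      have E4 : u * Real.exp (-(cs*u)) ≤ 4/cs * Real.exp (-(cs/4*u)) := by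
        calc u * Real.exp (-(cs*u)) ≤ (4/cs * Real.exp (cs/4*u)) * Real.exp (-(cs*u)) :=
              mul_le_mul_of_nonneg_right E3 (Real.exp_nonneg _)
          _ = 4/cs * Real.exp (cs/4*u - cs*u) := by rw [mul_assoc, ← Real.exp_add]; ring_nf
          _ ≤ 4/cs * Real.exp (-(cs/4*u)) := by
              have h : cs/4*u - cs*u ≤ -(cs/4*u) := by nlinarith
              exact mul_le_mul_of_nonneg_left (Real.exp_le_exp.2 h) (by positivity)
      have decomp : g1 s - Real.exp (-A0) * F s
          = Real.exp (-A1) * (F (s+τ) - F s) + F s * (Real.exp (-A1) - Real.exp (-A0)) := by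
        simp only [hg1def, ← hA1]; ring
      have hrw : Real.exp (cs/4 * (s - t)) = Real.exp (-(cs/4*u)) := by
        congr 1; simp only [hu]; ring
      rw [decomp, hrw]
      have step1 : |Real.exp (-A1) * (F (s+τ) - F s) + F s * (Real.exp (-A1) - Real.exp (-A0))|
          ≤ Real.exp (-A1) * |F (s+τ) - F s| + |F s| * |Real.exp (-A1) - Real.exp (-A0)| := by
        refine (abs_add_le _ _).trans ?_
        rw [abs_mul, abs_mul, Real.abs_exp]
      have T1 : Real.exp (-A1) * |F (s+τ) - F s| ≤ Real.exp (-(cs*u)) * ε₁ :=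
        mul_le_mul E1 (hτF s).le (abs_nonneg _) (Real.exp_nonneg _)
      have T2 : |F s| * |Real.exp (-A1) - Real.exp (-A0)|
          ≤ M * (Real.exp (-(cs*u)) * (ε₁ * u)) := by
        refine (mul_le_mul (hMb s) E2 (abs_nonneg _) hM0).trans ?_
        gcongr
      have T3 : Real.exp (-(cs*u)) * ε₁ ≤ ε₁ * Real.exp (-(cs/4*u)) := by
        rw [mul_comm]; exact mul_le_mul_of_nonneg_left E0 hε₁pos.le
      have T4 : M * (Real.exp (-(cs*u)) * (ε₁ * u)) ≤ ε₁ * (4*M/cs) * Real.exp (-(cs/4*u)) := by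
        have h5 := mul_le_mul_of_nonneg_left E4 (mul_nonneg hε₁pos.le hM0)
        calc M * (Real.exp (-(cs*u)) * (ε₁ * u)) = (ε₁*M) * (u * Real.exp (-(cs*u))) := by ring
          _ ≤ (ε₁*M) * (4/cs * Real.exp (-(cs/4*u))) := h5
          _ = ε₁ * (4*M/cs) * Real.exp (-(cs/4*u)) := by ring
      calc |Real.exp (-A1) * (F (s+τ) - F s) + F s * (Real.exp (-A1) - Real.exp (-A0))|
          ≤ Real.exp (-A1) * |F (s+τ) - F s| + |F s| * |Real.exp (-A1) - Real.exp (-A0)| := step1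
        _ ≤ Real.exp (-(cs*u)) * ε₁ + M * (Real.exp (-(cs*u)) * (ε₁ * u)) := add_le_add T1 T2
        _ ≤ ε₁ * Real.exp (-(cs/4*u)) + ε₁ * (4*M/cs) * Real.exp (-(cs/4*u)) := add_le_add T3 T4
        _ = ε₁ * CC * Real.exp (-(cs/4*u)) := by rw [hCC]; ring
    -- integrate the pointwise bound
    have hdint : IntegrableOn
        (fun s => g1 s - Real.exp (-(∫ u in Set.Ioc s t, c u)) * F s) (Set.Iic t) :=
      hg1int.sub (hIntOn t)
    have hbint : IntegrableOn (fun s => ε₁ * CC * Real.exp (cs/4 * (s - t))) (Set.Iic t) :=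
      (exp_shift_integrableOn (cs/4) t hcs4).const_mul (ε₁ * CC)
    have hint1 : |x (t+τ) - x t| ≤ ∫ s in Set.Iic t,
        |g1 s - Real.exp (-(∫ u in Set.Ioc s t, c u)) * F s| := by
      rw [hdiff]
      simpa only [Real.norm_eq_abs] using norm_integral_le_integral_norm
        (μ := volume.restrict (Set.Iic t))
        (fun s => g1 s - Real.exp (-(∫ u in Set.Ioc s t, c u)) * F s)
    have hint2 : (∫ s in Set.Iic t,
        |g1 s - Real.exp (-(∫ u in Set.Ioc s t, c u)) * F s|)
        ≤ ∫ s in Set.Iic t, ε₁ * CC * Real.exp (cs/4 * (s - t)) :=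
      setIntegral_mono_on hdint.abs hbint measurableSet_Iic hpt
    have hint3 : (∫ s in Set.Iic t, ε₁ * CC * Real.exp (cs/4 * (s - t))) = ε₁ * D := by
      rw [integral_const_mul, hKt (cs/4) hcs4 t, hD, hK4]; ring
    have hfin : ε₁ * D < ε := by
      rw [hε₁, div_mul_eq_mul_div, div_lt_iff₀ (by positivity)]
      nlinarith
    linarith
  refine ⟨hIntOn, ⟨(∫ s in Set.Iic (0:ℝ), Real.exp (cs * s)) * M, habs_bound⟩, hxcont, ?_⟩
  intro ε hε
  obtain ⟨L, hL, h⟩ := hap ε hε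
  refine ⟨L, hL, fun a => ?_⟩
  obtain ⟨τ, hm, hp⟩ := h a
  exact ⟨τ, hm, fun t => by simpa [Real.norm_eq_abs] using hp t⟩
end
end
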